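/- arXiv:2105.06513 — 2 statements merged into one kernel-verified Lean document; each statement's English description precedes it below -/
import Mathlib

section
/- Let g ≥ 2 and b > 1 be integers with gcd(b,g) = 1, let a be a positive integer with gcd(a,b) = 1 and a < b^k, let j ≥ 1, t ≥ 1 and k ≥ c_g(b). Set u_t = b^t mod g^j. Then for every s' ∈ {0,…,g^j−1}: ν_{k+t}(s') = ⌊b^t/g^j⌋·ord_g(b^k) + Σ_{m=0}^{u_t−1} ν_k((s'·u_t + m) mod g^j). -/
/-- `ordg g m = min {n ≥ 1 : g^n ≡ 1 (mod m)}`, the multiplicative order of `g` modulo `m`. -/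
noncomputable def ordg (g m : ℕ) : ℕ := sInf {n : ℕ | 0 < n ∧ g ^ n ≡ 1 [MOD m]}

/-- `cg g b` is the least `c ≥ 1` such that `ord_g(b^{c+t}) = b^t·ord_g(b^c)` for all `t ≥ 1`. -/
noncomputable def cg (g b : ℕ) : ℕ :=
  sInf {c : ℕ | 0 < c ∧ ∀ t : ℕ, 0 < t → ordg g (b ^ (c + t)) = b ^ t * ordg g (b ^ c)}

/-- `nu g b a j k s` is the absolute frequency of the `j`-word `s` in the enlarged
repetend of `a/b^k`: the number of `i` with `j ≤ i ≤ ord_g(b^k)+j−1` and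
`⌊a·g^i/b^k⌋ mod g^j = s`. -/
noncomputable def nu (g b a j k s : ℕ) : ℕ :=
  ((Finset.Icc j (ordg g (b ^ k) + j - 1)).filter
    (fun i => (a * g ^ i / b ^ k) % g ^ j = s)).card

section OrdBasics

variable {g m n : ℕ}

lemma ordg_mem (hg : Nat.Coprime g m) (hm : 0 < m) :
    0 < ordg g m ∧ g ^ ordg g m ≡ 1 [MOD m] := by
  have h : {n : ℕ | 0 < n ∧ g ^ n ≡ 1 [MOD m]}.Nonempty :=
    ⟨m.totient, Nat.totient_pos.mpr hm, Nat.ModEq.pow_totient hg⟩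
  exact Nat.sInf_mem h

lemma ordg_pos (hg : Nat.Coprime g m) (hm : 0 < m) : 0 < ordg g m := (ordg_mem hg hm).1

lemma ordg_modEq (hg : Nat.Coprime g m) (hm : 0 < m) : g ^ ordg g m ≡ 1 [MOD m] :=
  (ordg_mem hg hm).2

lemma pow_modEq_one_of_ordg_dvd (hg : Nat.Coprime g m) (hm : 0 < m)
    (h : ordg g m ∣ n) : g ^ n ≡ 1 [MOD m] := by
  obtain ⟨c, rfl⟩ := h
  calc g ^ (ordg g m * c) = (g ^ ordg g m) ^ c := by rw [pow_mul]
    _ ≡ 1 ^ c [MOD m] := (ordg_modEq hg hm).pow c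
    _ = 1 := one_pow c

lemma ordg_dvd_of_modEq (hg : Nat.Coprime g m) (hm : 0 < m)
    (h : g ^ n ≡ 1 [MOD m]) : ordg g m ∣ n := by
  set N := ordg g m with hN
  have hq : g ^ (N * (n / N)) ≡ 1 [MOD m] :=
    pow_modEq_one_of_ordg_dvd hg hm (Dvd.intro _ rfl)
  have hsplit : g ^ n = g ^ (N * (n / N)) * g ^ (n % N) := by
    rw [← pow_add, Nat.div_add_mod]
  have hr : g ^ (n % N) ≡ 1 [MOD m] := by
    have h2 : g ^ (N * (n / N)) * g ^ (n % N) ≡ 1 * g ^ (n % N) [MOD m] :=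
      hq.mul_right _
    calc g ^ (n % N) = 1 * g ^ (n % N) := (one_mul _).symm
      _ ≡ g ^ (N * (n / N)) * g ^ (n % N) [MOD m] := h2.symm
      _ = g ^ n := hsplit.symm
      _ ≡ 1 [MOD m] := h
  have hzero : n % N = 0 := by
    by_contra hne
    have hmem : n % N ∈ {i : ℕ | 0 < i ∧ g ^ i ≡ 1 [MOD m]} :=
      ⟨Nat.pos_of_ne_zero hne, hr⟩
    have hle : ordg g m ≤ n % N := Nat.sInf_le hmem
    have hlt := Nat.mod_lt n (ordg_pos hg hm)
    rw [← hN] at hle hlt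
    omega
  exact Nat.dvd_of_mod_eq_zero hzero

lemma ordg_dvd_iff (hg : Nat.Coprime g m) (hm : 0 < m) :
    ordg g m ∣ n ↔ g ^ n ≡ 1 [MOD m] :=
  ⟨pow_modEq_one_of_ordg_dvd hg hm, ordg_dvd_of_modEq hg hm⟩

lemma ordg_dvd_ordg_of_dvd {m₁ m₂ : ℕ} (hg : Nat.Coprime g m₂) (h1 : 0 < m₁)
    (h2 : 0 < m₂) (hd : m₁ ∣ m₂) : ordg g m₁ ∣ ordg g m₂ := by
  have hg1 : Nat.Coprime g m₁ := Nat.Coprime.coprime_dvd_right hd hg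
  exact ordg_dvd_of_modEq hg1 h1 ((ordg_modEq hg h2).of_dvd hd)

end OrdBasics

section Binomial

lemma one_add_pow (x n : ℕ) : ∃ z, (1 + x) ^ n = 1 + n * x + x ^ 2 * z := by
  induction n with
  | zero => exact ⟨0, by ring⟩
  | succ n ih =>
    obtain ⟨z, hz⟩ := ih
    exact ⟨n + z + x * z, by rw [pow_succ, hz]; ring⟩

lemma pow_eq_one_add {g n M m : ℕ} (h0 : 0 < g ^ n)
    (h : g ^ n ≡ 1 [MOD M ^ m]) : ∃ lam, g ^ n = 1 + lam * M ^ m := by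
  have hdvd : M ^ m ∣ g ^ n - 1 := (Nat.modEq_iff_dvd' h0).mp h.symm
  obtain ⟨lam, hlam⟩ := hdvd
  rw [Nat.mul_comm] at hlam
  exact ⟨lam, by omega⟩

/-- the key jump lemma -/
lemma jump {g n M m : ℕ} (hm : 1 ≤ m)
    (h : g ^ n ≡ 1 [MOD M ^ m]) : g ^ (M * n) ≡ 1 [MOD M ^ (m + 1)] := by
  rcases Nat.eq_zero_or_pos (g ^ n) with h0 | h0
  · have h00 : (0 : ℕ) ≡ 1 [MOD M ^ m] := h0 ▸ h
    have hdvd : M ^ m ∣ 1 := by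
      have := (Nat.modEq_iff_dvd' (by norm_num)).mp h00
      simpa using this
    have hMm : M ^ m = 1 := Nat.dvd_one.mp hdvd
    have hM1 : M = 1 := (pow_eq_one_iff.mp hMm).resolve_right (by omega)
    have : M ^ (m + 1) = 1 := by rw [hM1, one_pow]
    rw [this]
    exact Nat.modEq_one
  · obtain ⟨lam, hlam⟩ := pow_eq_one_add h0 h
    obtain ⟨z, hz⟩ := one_add_pow (lam * M ^ m) M
    have hpow : g ^ (M * n) = 1 + M * (lam * M ^ m) + (lam * M ^ m) ^ 2 * z := by
      rw [mul_comm M n, pow_mul, hlam, hz]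
    have hdvd : M ^ (m + 1) ∣ M * (lam * M ^ m) + (lam * M ^ m) ^ 2 * z := by
      have d1 : M ^ (m + 1) ∣ M * (lam * M ^ m) :=
        ⟨lam, by ring⟩
      have d2 : M ^ (m + 1) ∣ (lam * M ^ m) ^ 2 * z := by
        have h2 : (lam * M ^ m) ^ 2 * z = M ^ (2 * m) * (lam ^ 2 * z) := by ring
        rw [h2]
        exact Dvd.dvd.mul_right (pow_dvd_pow M (by omega)) _
      exact Nat.dvd_add d1 d2
    have : g ^ (M * n) - 1 = M * (lam * M ^ m) + (lam * M ^ m) ^ 2 * z := by omega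
    exact ((Nat.modEq_iff_dvd' (by omega)).mpr (this ▸ hdvd)).symm

end Binomial

section PerPrime

variable {g p : ℕ}

noncomputable def A (g p m : ℕ) : ℕ := ordg g (p ^ m)

noncomputable def LL (g p m : ℕ) : ℕ := (g ^ (ordg g (p ^ m)) - 1) / p ^ m

lemma cop_pow (hgp : Nat.Coprime g p) (m : ℕ) : Nat.Coprime g (p ^ m) :=
  Nat.Coprime.pow_right m hgp

lemma ppow_pos (hp : p.Prime) (m : ℕ) : 0 < p ^ m :=
  Nat.pow_pos hp.pos

lemma A_pos (hp : p.Prime) (hgp : Nat.Coprime g p) (m : ℕ) : 0 < A g p m :=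
  ordg_pos (cop_pow hgp m) (ppow_pos hp m)

lemma L_spec (hp : p.Prime) (hgp : Nat.Coprime g p) (hg : 2 ≤ g) (m : ℕ) :
    g ^ A g p m = 1 + LL g p m * p ^ m ∧ 0 < LL g p m := by
  have hmod := ordg_modEq (cop_pow hgp m) (ppow_pos hp m)
  have h0 : 0 < g ^ A g p m := Nat.pow_pos (by omega)
  obtain ⟨lam, hlam⟩ := pow_eq_one_add h0 hmod
  have hgt : 1 < g ^ A g p m := by
    calc 1 < 2 := by norm_num
      _ ≤ 2 ^ A g p m := Nat.le_self_pow (by have := A_pos hp hgp m; omega) 2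
      _ ≤ g ^ A g p m := Nat.pow_le_pow_left hg _
  have hLL : LL g p m = lam := by
    unfold LL A at *
    rw [hlam]
    have h2 : 1 + lam * p ^ m - 1 = lam * p ^ m := by omega
    rw [h2, Nat.mul_comm]
    exact Nat.mul_div_cancel_left _ (ppow_pos hp m)
  rw [hLL]
  refine ⟨hlam, ?_⟩
  rcases Nat.eq_zero_or_pos lam with rfl | h
  · rw [Nat.zero_mul, Nat.add_zero] at hlam; omega
  · exact h

lemma A_dvd_succ (hp : p.Prime) (hgp : Nat.Coprime g p) (m : ℕ) :
    A g p m ∣ A g p (m + 1) :=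
  ordg_dvd_ordg_of_dvd (cop_pow hgp (m + 1)) (ppow_pos hp m) (ppow_pos hp (m + 1))
    (pow_dvd_pow p (by omega))

lemma A_succ_dvd (hp : p.Prime) (hgp : Nat.Coprime g p) {m : ℕ} (hm : 1 ≤ m) :
    A g p (m + 1) ∣ p * A g p m := by
  have hmod := ordg_modEq (cop_pow hgp m) (ppow_pos hp m)
  exact ordg_dvd_of_modEq (cop_pow hgp (m + 1)) (ppow_pos hp (m + 1)) (jump hm hmod)

lemma A_succ_cases (hp : p.Prime) (hgp : Nat.Coprime g p) {m : ℕ} (hm : 1 ≤ m) :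
    A g p (m + 1) = A g p m ∨ A g p (m + 1) = p * A g p m := by
  obtain ⟨d, hd⟩ := A_dvd_succ hp hgp m
  have h2 : A g p m * d ∣ A g p m * p := by
    rw [← hd, Nat.mul_comm (A g p m) p]
    exact A_succ_dvd hp hgp hm
  have hdp : d ∣ p := (Nat.mul_dvd_mul_iff_left (A_pos hp hgp m)).mp h2
  rcases Nat.Prime.eq_one_or_self_of_dvd hp d hdp with h1 | h1
  · left; rw [hd, h1, Nat.mul_one]
  · right; rw [hd, h1, Nat.mul_comm]

lemma dvd_L_iff (hp : p.Prime) (hgp : Nat.Coprime g p) (hg : 2 ≤ g) {m : ℕ} :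
    p ∣ LL g p m ↔ g ^ A g p m ≡ 1 [MOD p ^ (m + 1)] := by
  obtain ⟨heq, hpos⟩ := L_spec hp hgp hg m
  have h1 : 1 ≤ g ^ A g p m := by omega
  constructor
  · intro hdvd
    obtain ⟨e, he⟩ := hdvd
    have hsub : g ^ A g p m - 1 = e * p ^ (m + 1) := by
      rw [pow_succ]
      have : LL g p m * p ^ m = e * (p ^ m * p) := by rw [he]; ring
      omega
    have hc : p ^ (m + 1) * e = e * p ^ (m + 1) := Nat.mul_comm _ _
    exact (Nat.ModEq.symm <| (Nat.modEq_iff_dvd' h1).mpr ⟨e, by omega⟩)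
  · intro hmod
    have hdvd : p ^ (m + 1) ∣ g ^ A g p m - 1 := (Nat.modEq_iff_dvd' h1).mp hmod.symm
    have hLm : g ^ A g p m - 1 = p ^ m * LL g p m := by
      have : LL g p m * p ^ m = p ^ m * LL g p m := Nat.mul_comm _ _
      omega
    rw [hLm, pow_succ] at hdvd
    -- p ^ m * p ∣ p ^ m * LL
    exact (Nat.mul_dvd_mul_iff_left (ppow_pos hp m)).mp hdvd

lemma A_succ_eq_iff (hp : p.Prime) (hgp : Nat.Coprime g p) (hg : 2 ≤ g) {m : ℕ}
    (hm : 1 ≤ m) : A g p (m + 1) = A g p m ↔ p ∣ LL g p m := by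
  constructor
  · intro h
    have hmod := ordg_modEq (cop_pow hgp (m + 1)) (ppow_pos hp (m + 1))
    rw [show ordg g (p ^ (m+1)) = A g p (m+1) from rfl, h] at hmod
    exact (dvd_L_iff hp hgp hg).mpr hmod
  · intro h
    have hmod := (dvd_L_iff hp hgp hg).mp h
    have h1 : A g p (m + 1) ∣ A g p m :=
      ordg_dvd_of_modEq (cop_pow hgp (m + 1)) (ppow_pos hp (m + 1)) hmod
    exact Nat.dvd_antisymm h1 (A_dvd_succ hp hgp m)

lemma A_succ_jump (hp : p.Prime) (hgp : Nat.Coprime g p) (hg : 2 ≤ g) {m : ℕ}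
    (hm : 1 ≤ m) (h : ¬ p ∣ LL g p m) : A g p (m + 1) = p * A g p m := by
  rcases A_succ_cases hp hgp hm with h1 | h1
  · exact absurd ((A_succ_eq_iff hp hgp hg hm).mp h1) h
  · exact h1

lemma L_succ_of_eq (hp : p.Prime) (hgp : Nat.Coprime g p) (hg : 2 ≤ g) {m : ℕ}
    (h : A g p (m + 1) = A g p m) : LL g p (m + 1) * p = LL g p m := by
  obtain ⟨heq1, _⟩ := L_spec hp hgp hg (m + 1)
  obtain ⟨heq2, _⟩ := L_spec hp hgp hg m
  rw [h, heq2] at heq1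
  have : (LL g p (m + 1) * p) * p ^ m = LL g p m * p ^ m := by
    have h2 : LL g p (m + 1) * p ^ (m + 1) = (LL g p (m + 1) * p) * p ^ m := by ring
    omega
  exact Nat.eq_of_mul_eq_mul_right (ppow_pos hp m) this

lemma L_mod_of_jump (hp : p.Prime) (hgp : Nat.Coprime g p) (hg : 2 ≤ g) {m : ℕ}
    (hm : 2 ≤ m) (h : A g p (m + 1) = p * A g p m) :
    LL g p (m + 1) % p = LL g p m % p := by
  obtain ⟨heq1, _⟩ := L_spec hp hgp hg (m + 1)
  obtain ⟨heq2, _⟩ := L_spec hp hgp hg m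
  obtain ⟨z, hz⟩ := one_add_pow (LL g p m * p ^ m) p
  have hexp : g ^ A g p (m + 1) = (1 + LL g p m * p ^ m) ^ p := by
    rw [h, Nat.mul_comm, pow_mul, heq2]
  rw [heq1, hz] at hexp
  -- 1 + LL(m+1)*p^(m+1) = 1 + p*(LLm*p^m) + (LLm*p^m)^2*z
  have hE : LL g p (m + 1) * p ^ (m + 1) =
      (LL g p m + (LL g p m ^ 2 * z) * p ^ (m - 1)) * p ^ (m + 1) := by
    have hsplit : (LL g p m + (LL g p m ^ 2 * z) * p ^ (m - 1)) * p ^ (m + 1)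
        = p * (LL g p m * p ^ m) + (LL g p m * p ^ m) ^ 2 * z := by
      have hmm : m - 1 + (m + 1) = m + m := by omega
      have : p ^ (m - 1) * p ^ (m + 1) = p ^ m * p ^ m := by
        rw [← pow_add, hmm, pow_add]
      calc (LL g p m + (LL g p m ^ 2 * z) * p ^ (m - 1)) * p ^ (m + 1)
          = LL g p m * p ^ (m+1) + (LL g p m ^ 2 * z) * (p ^ (m-1) * p ^ (m+1)) := by ring
        _ = LL g p m * p ^ (m+1) + (LL g p m ^ 2 * z) * (p ^ m * p ^ m) := by rw [this]
        _ = p * (LL g p m * p ^ m) + (LL g p m * p ^ m) ^ 2 * z := by ring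
    omega
  have hL : LL g p (m + 1) = LL g p m + (LL g p m ^ 2 * z) * p ^ (m - 1) :=
    Nat.eq_of_mul_eq_mul_right (ppow_pos hp (m + 1)) hE
  rw [hL]
  have hm1 : p ^ (m - 1) = p ^ (m - 2) * p := by
    rw [← pow_succ]
    congr 1
    omega
  rw [hm1, ← Nat.mul_assoc]
  exact Nat.add_mul_mod_self_right _ _ _

end PerPrime

section PerPrime2

variable {g p : ℕ}

lemma L_descend (hp : p.Prime) (hgp : Nat.Coprime g p) (hg : 2 ≤ g) :
    ∀ n m, 2 ≤ m → LL g p m ≤ n → ∃ c, 2 ≤ c ∧ ¬ p ∣ LL g p c := by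
  intro n
  induction n with
  | zero =>
    intro m hm hle
    have := (L_spec hp hgp hg m).2
    omega
  | succ n ih =>
    intro m hm hle
    by_cases hdvd : p ∣ LL g p m
    · have heq : A g p (m + 1) = A g p m :=
        (A_succ_eq_iff hp hgp hg (by omega)).mpr hdvd
      have hLp : LL g p (m + 1) * p = LL g p m := L_succ_of_eq hp hgp hg heq
      have hpos := (L_spec hp hgp hg (m + 1)).2
      have h2 : 2 * LL g p (m + 1) ≤ LL g p m := by
        calc 2 * LL g p (m + 1) ≤ p * LL g p (m + 1) :=
              Nat.mul_le_mul_right _ hp.two_le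
          _ = LL g p m := by rw [Nat.mul_comm]; exact hLp
      exact ih (m + 1) (by omega) (by omega)
    · exact ⟨m, hm, hdvd⟩

lemma prime_stab_from (hp : p.Prime) (hgp : Nat.Coprime g p) (hg : 2 ≤ g) {c : ℕ}
    (hc : 2 ≤ c) (h : ¬ p ∣ LL g p c) :
    ∀ m, c ≤ m → ¬ p ∣ LL g p m ∧ A g p (m + 1) = p * A g p m := by
  intro m hm
  induction m, hm using Nat.le_induction with
  | base => exact ⟨h, A_succ_jump hp hgp hg (by omega) h⟩
  | succ m hm ih =>
    obtain ⟨hnd, hjump⟩ := ih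
    have hmod : LL g p (m + 1) % p = LL g p m % p :=
      L_mod_of_jump hp hgp hg (by omega) hjump
    have hnd' : ¬ p ∣ LL g p (m + 1) := by
      rw [Nat.dvd_iff_mod_eq_zero] at hnd ⊢
      omega
    exact ⟨hnd', A_succ_jump hp hgp hg (by omega) hnd'⟩

lemma prime_stab (hp : p.Prime) (hgp : Nat.Coprime g p) (hg : 2 ≤ g) :
    ∃ c, 2 ≤ c ∧ ∀ m, c ≤ m → A g p (m + 1) = p * A g p m := by
  obtain ⟨c, hc, hnd⟩ := L_descend hp hgp hg (LL g p 2) 2 (by norm_num) le_rfl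
  exact ⟨c, hc, fun m hm => (prime_stab_from hp hgp hg hc hnd m hm).2⟩

lemma A_fact_const (hp : p.Prime) (hgp : Nat.Coprime g p) (hg : 2 ≤ g) {q : ℕ}
    (hq : q ≠ p) : ∀ m, 1 ≤ m →
    (A g p m).factorization q = (A g p 1).factorization q := by
  intro m hm
  induction m, hm using Nat.le_induction with
  | base => rfl
  | succ m hm ih =>
    rcases A_succ_cases hp hgp hm with h | h
    · rw [h]; exact ih
    · rw [h, Nat.factorization_mul hp.ne_zero (A_pos hp hgp m).ne',
        Finsupp.add_apply, hp.factorization, Finsupp.single_apply,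
        if_neg (fun hh => hq hh.symm), Nat.zero_add]
      exact ih

lemma A_fact_growth (hp : p.Prime) (hgp : Nat.Coprime g p) (hg : 2 ≤ g) {c : ℕ}
    (hstab : ∀ m, c ≤ m → A g p (m + 1) = p * A g p m) :
    ∀ m, c ≤ m → m - c ≤ (A g p m).factorization p := by
  intro m hm
  induction m, hm using Nat.le_induction with
  | base => omega
  | succ m hm ih =>
    rw [hstab m hm, Nat.factorization_mul hp.ne_zero (A_pos hp hgp m).ne',
      Finsupp.add_apply, hp.factorization, Finsupp.single_apply, if_pos rfl]
    omega

end PerPrime2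

section Global

variable {g b : ℕ}

lemma modEq_one_prod {x : ℕ} (s : Finset ℕ) (f : ℕ → ℕ)
    (hcop : ∀ i ∈ s, ∀ j ∈ s, i ≠ j → Nat.Coprime (f i) (f j))
    (h : ∀ i ∈ s, x ≡ 1 [MOD f i]) : x ≡ 1 [MOD ∏ i ∈ s, f i] := by
  induction s using Finset.cons_induction with
  | empty => simp [Nat.modEq_one]
  | cons a s ha ih =>
    rw [Finset.prod_cons]
    have hco : Nat.Coprime (f a) (∏ i ∈ s, f i) :=
      Nat.Coprime.prod_right fun i hi =>
        hcop a (Finset.mem_cons_self a s) i (Finset.mem_cons_of_mem hi)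
          (fun he => ha (he ▸ hi))
    refine (Nat.modEq_and_modEq_iff_modEq_mul hco).mp
      ⟨h a (Finset.mem_cons_self a s), ih ?_ ?_⟩
    · intro i hi j hj hij
      exact hcop i (Finset.mem_cons_of_mem hi) j (Finset.mem_cons_of_mem hj) hij
    · intro i hi
      exact h i (Finset.mem_cons_of_mem hi)

lemma bpow_eq_prod (hb0 : b ≠ 0) (k : ℕ) :
    b ^ k = ∏ p ∈ b.primeFactors, p ^ (k * b.factorization p) := by
  conv_lhs => rw [← Nat.factorization_prod_pow_eq_self hb0]
  rw [Finsupp.prod, Nat.support_factorization, ← Finset.prod_pow]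
  refine Finset.prod_congr rfl fun p hp => ?_
  rw [← pow_mul, Nat.mul_comm]

lemma ppow_dvd_bpow (hb0 : b ≠ 0) {p : ℕ} (hp : p ∈ b.primeFactors) (k : ℕ) :
    p ^ (k * b.factorization p) ∣ b ^ k := by
  have h1 : p ^ b.factorization p ∣ b := Nat.ordProj_dvd b p
  calc p ^ (k * b.factorization p) = (p ^ b.factorization p) ^ k := by
        rw [← pow_mul, Nat.mul_comm]
    _ ∣ b ^ k := pow_dvd_pow_of_dvd h1 k

lemma A_dvd_NN (hg : 2 ≤ g) (hb : 1 < b) (hgb : Nat.Coprime g b)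
    {p : ℕ} (hp : p ∈ b.primeFactors) (k : ℕ) :
    A g p (k * b.factorization p) ∣ ordg g (b ^ k) := by
  have hb0 : b ≠ 0 := by omega
  have hbk : 0 < b ^ k := Nat.pow_pos (by omega)
  have hppk : 0 < p ^ (k * b.factorization p) :=
    Nat.pow_pos (Nat.prime_of_mem_primeFactors hp).pos
  exact ordg_dvd_ordg_of_dvd (Nat.Coprime.pow_right k hgb) hppk hbk
    (ppow_dvd_bpow hb0 hp k)

lemma NN_eq_lcm (hg : 2 ≤ g) (hb : 1 < b) (hgb : Nat.Coprime g b) (k : ℕ) :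
    ordg g (b ^ k) = (b.primeFactors).lcm
      (fun p => A g p (k * b.factorization p)) := by
  have hb0 : b ≠ 0 := by omega
  have hbk : 0 < b ^ k := Nat.pow_pos (by omega)
  refine Nat.dvd_antisymm ?_ (Finset.lcm_dvd fun p hp => A_dvd_NN hg hb hgb hp k)
  refine ordg_dvd_of_modEq (Nat.Coprime.pow_right k hgb) hbk ?_
  rw [bpow_eq_prod hb0 k]
  refine modEq_one_prod _ _ ?_ ?_
  · intro i hi j hj hij
    exact Nat.Coprime.pow _ _ ((Nat.coprime_primes
      (Nat.prime_of_mem_primeFactors hi) (Nat.prime_of_mem_primeFactors hj)).mpr hij)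
  · intro p hp
    have hgp : Nat.Coprime g p := Nat.Coprime.coprime_dvd_right
      (Nat.dvd_of_mem_primeFactors hp) hgb
    refine pow_modEq_one_of_ordg_dvd (cop_pow hgp _)
      (ppow_pos (Nat.prime_of_mem_primeFactors hp) _) ?_
    exact Finset.dvd_lcm hp

lemma finset_lcm_ne_zero (s : Finset ℕ) (f : ℕ → ℕ) (hf : ∀ i ∈ s, f i ≠ 0) :
    s.lcm f ≠ 0 := by
  classical
  induction s using Finset.induction_on with
  | empty => simp
  | @insert a s ha ih =>
    rw [Finset.lcm_insert, lcm_eq_nat_lcm]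
    have h1 := hf a (Finset.mem_insert_self a s)
    have h2 := ih fun i hi => hf i (Finset.mem_insert_of_mem hi)
    simp [Nat.lcm_ne_zero h1 h2]

lemma fact_lcm (s : Finset ℕ) (f : ℕ → ℕ) (hf : ∀ i ∈ s, f i ≠ 0) (q : ℕ) :
    (s.lcm f).factorization q = s.sup fun i => (f i).factorization q := by
  classical
  induction s using Finset.induction_on with
  | empty => simp
  | @insert a s ha ih =>
    rw [Finset.lcm_insert, lcm_eq_nat_lcm, Finset.sup_insert,
      Nat.factorization_lcm (hf a (Finset.mem_insert_self a s))
        (finset_lcm_ne_zero s f fun i hi => hf i (Finset.mem_insert_of_mem hi)),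
      Finsupp.sup_apply, ih fun i hi => hf i (Finset.mem_insert_of_mem hi)]

end Global

section Global2

variable {g b : ℕ}

lemma A_iter {g p c : ℕ} (hstab : ∀ m, c ≤ m → A g p (m + 1) = p * A g p m) {m : ℕ}
    (hm : c ≤ m) : ∀ e, A g p (m + e) = p ^ e * A g p m := by
  intro e
  induction e with
  | zero => simp
  | succ e ih =>
    rw [show m + (e + 1) = (m + e) + 1 by ring, hstab _ (by omega), ih, pow_succ]
    ring

lemma global_stab (hg : 2 ≤ g) (hb : 1 < b) (hgb : Nat.Coprime g b) :
    ∃ c, 1 ≤ c ∧ ∀ k, c ≤ k → ordg g (b ^ (k + 1)) = b * ordg g (b ^ k) := by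
  classical
  have hb0 : b ≠ 0 := by omega
  set pf := b.primeFactors with hpf
  have hprime : ∀ p ∈ pf, p.Prime := fun p hp => Nat.prime_of_mem_primeFactors hp
  have hgp : ∀ p ∈ pf, Nat.Coprime g p := fun p hp =>
    Nat.Coprime.coprime_dvd_right (Nat.dvd_of_mem_primeFactors hp) hgb
  have H : ∀ p ∈ pf, ∃ c, 2 ≤ c ∧ ∀ m, c ≤ m → A g p (m + 1) = p * A g p m :=
    fun p hp => prime_stab (hprime p hp) (hgp p hp) hg
  choose! cp hcp2 hcpstab using H
  set Cb : ℕ → ℕ := fun q => pf.sup fun p => (A g p 1).factorization q with hCb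
  set K : ℕ := (pf.sup fun p => cp p + Cb p) + 1 with hK
  refine ⟨K, by omega, ?_⟩
  intro k hk
  have hkpos : 1 ≤ k := by omega
  have hEpos : ∀ p ∈ pf, 1 ≤ b.factorization p := fun p hp =>
    Nat.Prime.factorization_pos_of_dvd (hprime p hp) hb0 (Nat.dvd_of_mem_primeFactors hp)
  have hbox : ∀ p ∈ pf, cp p + Cb p < K := by
    intro p hp
    have h1 : cp p + Cb p ≤ pf.sup fun p => cp p + Cb p :=
      Finset.le_sup (f := fun p => cp p + Cb p) hp
    omega
  have hkcp : ∀ p ∈ pf, cp p ≤ k * b.factorization p := by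
    intro p hp
    have h1 := hbox p hp
    have h2 := hEpos p hp
    have h3 : k ≤ k * b.factorization p := Nat.le_mul_of_pos_right k (by omega)
    omega
  have hA0 : ∀ p ∈ pf, ∀ m, A g p m ≠ 0 :=
    fun p hp m => (A_pos (hprime p hp) (hgp p hp) m).ne'
  have hstep : ∀ p ∈ pf, A g p ((k + 1) * b.factorization p)
      = p ^ (b.factorization p) * A g p (k * b.factorization p) := by
    intro p hp
    rw [show (k + 1) * b.factorization p
        = k * b.factorization p + b.factorization p by ring]
    exact A_iter (hcpstab p hp) (hkcp p hp) _
  have hNN1 : ordg g (b ^ (k + 1)) ≠ 0 :=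
    (ordg_pos (Nat.Coprime.pow_right _ hgb) (Nat.pow_pos (by omega))).ne'
  have hNNk : ordg g (b ^ k) ≠ 0 :=
    (ordg_pos (Nat.Coprime.pow_right _ hgb) (Nat.pow_pos (by omega))).ne'
  refine Nat.eq_of_factorization_eq hNN1 (Nat.mul_ne_zero hb0 hNNk) ?_
  intro q
  by_cases hqprime : q.Prime
  swap
  · simp [Nat.factorization_eq_zero_of_not_prime _ hqprime]
  have hf1 : ∀ p ∈ pf, A g p ((k + 1) * b.factorization p) ≠ 0 := fun p hp => hA0 p hp _
  have hf2 : ∀ p ∈ pf, A g p (k * b.factorization p) ≠ 0 := fun p hp => hA0 p hp _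
  rw [NN_eq_lcm hg hb hgb (k + 1), NN_eq_lcm hg hb hgb k,
    Nat.factorization_mul hb0 (by rw [← NN_eq_lcm hg hb hgb k]; exact hNNk),
    Finsupp.add_apply, fact_lcm _ _ hf1 q, fact_lcm _ _ hf2 q]
  -- per-term values
  have hterm : ∀ p ∈ pf, (A g p ((k + 1) * b.factorization p)).factorization q
      = (p ^ b.factorization p).factorization q
        + (A g p (k * b.factorization p)).factorization q := by
    intro p hp
    rw [hstep p hp, Nat.factorization_mul (pow_ne_zero _ (hprime p hp).ne_zero)
      (hf2 p hp), Finsupp.add_apply]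
  by_cases hq : q ∈ pf
  · -- domination at q
    have hconstk : ∀ p ∈ pf, p ≠ q →
        (A g p (k * b.factorization p)).factorization q = (A g p 1).factorization q := by
      intro p hp hpq
      exact A_fact_const (hprime p hp) (hgp p hp) hg (fun h => hpq h.symm) _
        (by have := hEpos p hp; nlinarith)
    have hgrow : Cb q + 1 ≤ (A g q (k * b.factorization q)).factorization q := by
      have h1 := A_fact_growth (hprime q hq) (hgp q hq) hg (hcpstab q hq)
        (k * b.factorization q) (hkcp q hq)
      have h2 := hbox q hq
      have h3 := hEpos q hq
      have h4 : k ≤ k * b.factorization q := Nat.le_mul_of_pos_right k (by omega)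
      omega
    have domk : ∀ p ∈ pf, (A g p (k * b.factorization p)).factorization q
        ≤ (A g q (k * b.factorization q)).factorization q := by
      intro p hp
      by_cases hpq : p = q
      · subst hpq; exact le_rfl
      · rw [hconstk p hp hpq]
        have h1 : (A g p 1).factorization q ≤ Cb q :=
          Finset.le_sup (f := fun p => (A g p 1).factorization q) hp
        omega
    have hppow : ∀ p ∈ pf, (p ^ b.factorization p).factorization q
        = if p = q then b.factorization q else 0 := by
      intro p hp
      rw [Nat.Prime.factorization_pow (hprime p hp), Finsupp.single_apply]
      by_cases hpq : p = q
      · subst hpq; simp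
      · simp [hpq]
    have supk : (pf.sup fun p => (A g p (k * b.factorization p)).factorization q)
        = (A g q (k * b.factorization q)).factorization q :=
      le_antisymm (Finset.sup_le domk)
        (Finset.le_sup (f := fun p => (A g p (k * b.factorization p)).factorization q) hq
          : (A g q (k * b.factorization q)).factorization q ≤ _)
    have sup1 : (pf.sup fun p => (A g p ((k + 1) * b.factorization p)).factorization q)
        = b.factorization q + (A g q (k * b.factorization q)).factorization q := by
      refine le_antisymm (Finset.sup_le ?_) ?_
      · intro p hp
        rw [hterm p hp, hppow p hp]
        by_cases hpq : p = q
        · subst hpq; simp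
        · simp only [hpq, if_false, Nat.zero_add]
          have := domk p hp
          omega
      · have hle : (A g q ((k + 1) * b.factorization q)).factorization q
            ≤ pf.sup fun p => (A g p ((k + 1) * b.factorization p)).factorization q :=
          Finset.le_sup (f := fun p => (A g p ((k + 1) * b.factorization p)).factorization q) hq
        rw [hterm q hq, hppow q hq, if_pos rfl] at hle
        exact hle
    rw [sup1, supk]
  · -- q ∉ pf
    have hbq : b.factorization q = 0 := by
      refine Nat.factorization_eq_zero_of_not_dvd fun hdvd => hq ?_
      exact Nat.mem_primeFactors.mpr ⟨hqprime, hdvd, hb0⟩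
    have hcongr : ∀ p ∈ pf, (A g p ((k + 1) * b.factorization p)).factorization q
        = (A g p (k * b.factorization p)).factorization q := by
      intro p hp
      have hpq : q ≠ p := fun h => hq (h ▸ hp)
      have hc1 := A_fact_const (hprime p hp) (hgp p hp) hg hpq
        ((k + 1) * b.factorization p) (by have := hEpos p hp; nlinarith)
      have hc2 := A_fact_const (hprime p hp) (hgp p hp) hg hpq
        (k * b.factorization p) (by have := hEpos p hp; nlinarith)
      rw [hc1, hc2]
    rw [hbq, Nat.zero_add]
    exact Finset.sup_congr rfl hcongr

lemma cg_spec (hg : 2 ≤ g) (hb : 1 < b) (hgb : Nat.Coprime g b) :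
    0 < cg g b ∧ ∀ t, 0 < t →
      ordg g (b ^ (cg g b + t)) = b ^ t * ordg g (b ^ cg g b) := by
  obtain ⟨c, hc1, hc⟩ := global_stab hg hb hgb
  have hmem : c ∈ {c : ℕ | 0 < c ∧ ∀ t : ℕ, 0 < t →
      ordg g (b ^ (c + t)) = b ^ t * ordg g (b ^ c)} := by
    refine ⟨hc1, ?_⟩
    intro t ht
    induction t with
    | zero => omega
    | succ t ih =>
      rcases Nat.eq_zero_or_pos t with rfl | htpos
      · simpa using hc c le_rfl
      · rw [show c + (t + 1) = (c + t) + 1 from rfl, hc (c + t) (by omega), ih htpos,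
          pow_succ]
        ring
  exact Nat.sInf_mem ⟨c, hmem⟩

lemma ord_scale (hg : 2 ≤ g) (hb : 1 < b) (hgb : Nat.Coprime g b) {k t : ℕ}
    (hk : cg g b ≤ k) (ht : 0 < t) :
    ordg g (b ^ (k + t)) = b ^ t * ordg g (b ^ k) := by
  obtain ⟨hpos, hcg⟩ := cg_spec hg hb hgb
  rcases Nat.eq_or_lt_of_le hk with heq | hlt
  · rw [← heq]
    exact hcg t ht
  · have hdpos : 0 < k - cg g b := by omega
    have h1 : ordg g (b ^ k) = b ^ (k - cg g b) * ordg g (b ^ cg g b) := by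
      have h := hcg (k - cg g b) (by omega)
      rw [show cg g b + (k - cg g b) = k by omega] at h
      exact h
    have h2 : ordg g (b ^ (k + t)) = b ^ ((k - cg g b) + t) * ordg g (b ^ cg g b) := by
      rw [show k + t = cg g b + ((k - cg g b) + t) by omega]
      exact hcg ((k - cg g b) + t) (by omega)
    rw [h2, h1, pow_add]
    ring

end Global2

section Counting

lemma digit_shift {y P D : ℕ} (hP : 0 < P) (hD : 0 < D) :
    (y * D / P) % D = (y % P) * D / P := by
  have hsplit : y * D = (y % P) * D + (y / P * D) * P := by
    conv_lhs => rw [← Nat.div_add_mod y P]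
    ring
  rw [hsplit, Nat.add_mul_div_right _ _ hP]
  have hlt : (y % P) * D / P < D := by
    rw [Nat.div_lt_iff_lt_mul hP]
    calc (y % P) * D < P * D := (Nat.mul_lt_mul_right hD).mpr (Nat.mod_lt y hP)
      _ = D * P := Nat.mul_comm _ _
  rw [Nat.add_mul_mod_self_right, Nat.mod_eq_of_lt hlt]

lemma nu_eq_card {g b a j k : ℕ} (hord : 0 < ordg g (b ^ k)) (hP : 0 < b ^ k)
    (hD : 0 < g ^ j) (s : ℕ) :
    nu g b a j k s = ((Finset.range (ordg g (b ^ k))).filter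
      (fun l => (a * g ^ l % b ^ k) * g ^ j / b ^ k = s)).card := by
  have hmap : Finset.Icc j (ordg g (b ^ k) + j - 1)
      = (Finset.range (ordg g (b ^ k))).map
          ⟨fun l => l + j, add_left_injective j⟩ := by
    ext i
    simp only [Finset.mem_Icc, Finset.mem_map, Finset.mem_range,
      Function.Embedding.coeFn_mk]
    constructor
    · intro ⟨h1, h2⟩
      exact ⟨i - j, by omega, by omega⟩
    · rintro ⟨l, hl, rfl⟩
      omega
  rw [nu, hmap, Finset.filter_map, Finset.card_map]
  congr 1
  apply Finset.filter_congr
  intro l hl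
  simp only [Function.comp_apply, Function.Embedding.coeFn_mk]
  rw [show a * g ^ (l + j) = (a * g ^ l) * g ^ j from by rw [pow_add, Nat.mul_assoc],
    digit_shift hP hD]

lemma core_count {D B s' w : ℕ} (hD : 0 < D) (hB : 0 < B) (hs : s' < D) (hw : w < D) :
    ((Finset.range B).filter
      (fun c => s' * B ≤ c * D + w ∧ c * D + w < s' * B + B)).card
    = B / D + ((Finset.range (B % D)).filter
        (fun m => (s' * (B % D) + m) % D = w)).card := by
  have hu : B % D < D := Nat.mod_lt B hD
  -- upper bound for R
  have hmul1 : s' * B ≤ (D - 1) * B := Nat.mul_le_mul_right B (by omega)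
  have hmul2 : (D - 1) * B + B = D * B := by
    calc (D - 1) * B + B = ((D - 1) + 1) * B := by ring
      _ = D * B := by rw [Nat.sub_add_cancel (by omega : 1 ≤ D)]
  have hRB : (s' * B + (D - 1 - w) + B) / D ≤ B := by
    have h3 : s' * B + (D - 1 - w) + B < (B + 1) * D := by
      have e1 : (B + 1) * D = B * D + D := by ring
      have e2 : D * B = B * D := Nat.mul_comm _ _
      omega
    have h4 : (s' * B + (D - 1 - w) + B) / D < B + 1 := (Nat.div_lt_iff_lt_mul hD).mpr h3
    omega
  -- filter = Ico
  have hIco : ((Finset.range B).filter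
      (fun c => s' * B ≤ c * D + w ∧ c * D + w < s' * B + B))
      = Finset.Ico ((s' * B + (D - 1 - w)) / D) ((s' * B + (D - 1 - w) + B) / D) := by
    ext c
    simp only [Finset.mem_filter, Finset.mem_range, Finset.mem_Ico]
    have e1 : c + 1 ≤ (s' * B + (D - 1 - w)) / D ↔ (c + 1) * D ≤ s' * B + (D - 1 - w) :=
      Nat.le_div_iff_mul_le hD
    have e2 : c + 1 ≤ (s' * B + (D - 1 - w) + B) / D
        ↔ (c + 1) * D ≤ s' * B + (D - 1 - w) + B := Nat.le_div_iff_mul_le hD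
    have e3 : (c + 1) * D = c * D + D := by ring
    omega
  rw [hIco, Nat.card_Ico]
  have hAdd : (s' * B + (D - 1 - w) + B) / D = (s' * B + (D - 1 - w)) / D + B / D
      + if D ≤ (s' * B + (D - 1 - w)) % D + B % D then 1 else 0 := Nat.add_div hD
  -- now identify the indicator with the small filter
  set u := B % D with hu_def
  set σ := s' * u % D with hσ_def
  set m₀ := (w + (D - σ)) % D with hm0_def
  have hσlt : σ < D := Nat.mod_lt _ hD
  have hm0lt : m₀ < D := Nat.mod_lt _ hD
  have hkey : (σ + m₀) % D = w := by
    rw [hm0_def, Nat.add_mod_mod, show σ + (w + (D - σ)) = w + D by omega,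
      Nat.add_mod_right, Nat.mod_eq_of_lt hw]
  have hiter : ∀ m, m < D → ((s' * u + m) % D = w ↔ m = m₀) := by
    intro m hm
    have hl : (s' * u + m) % D = (σ + m) % D := by
      rw [hσ_def, Nat.mod_add_mod]
    constructor
    · intro h
      have h2 : (σ + m) % D = (σ + m₀) % D := by rw [← hl, h, hkey]
      have h3 : m ≡ m₀ [MOD D] := Nat.ModEq.add_left_cancel' σ h2
      have h4 : m % D = m₀ % D := h3
      rw [Nat.mod_eq_of_lt hm, Nat.mod_eq_of_lt hm0lt] at h4
      exact h4
    · rintro rfl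
      rw [hl, hkey]
  have hfilter : ((Finset.range u).filter (fun m => (s' * u + m) % D = w))
      = if m₀ < u then {m₀} else ∅ := by
    split_ifs with h
    · ext m
      simp only [Finset.mem_filter, Finset.mem_range, Finset.mem_singleton]
      constructor
      · intro ⟨h1, h2⟩
        exact (hiter m (by omega)).mp h2
      · rintro rfl
        exact ⟨h, (hiter m₀ hm0lt).mpr rfl⟩
    · ext m
      simp only [Finset.mem_filter, Finset.mem_range, Finset.notMem_empty,
        iff_false, not_and]
      intro h1 h2
      exact h ((hiter m (by omega)).mp h2 ▸ h1)
  have hX : (s' * B + (D - 1 - w)) % D = D - 1 - m₀ := by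
    have hsB : s' * B % D = σ := by
      rw [hσ_def, hu_def]
      conv_lhs => rw [Nat.mul_mod]
      conv_rhs => rw [Nat.mul_mod, Nat.mod_mod_of_dvd B dvd_rfl]
    have hc : (σ + (D - 1 - w) + (m₀ + w)) % D = (D - 1 - m₀ + (m₀ + w)) % D := by
      rw [show σ + (D - 1 - w) + (m₀ + w) = σ + m₀ + (D - 1) by omega,
        show D - 1 - m₀ + (m₀ + w) = w + (D - 1) by omega,
        ← Nat.mod_add_mod, hkey]
    have hstep2 : (σ + (D - 1 - w)) % D = (D - 1 - m₀) % D :=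
      Nat.ModEq.add_right_cancel' _ hc
    rw [← Nat.mod_add_mod, hsB, hstep2, Nat.mod_eq_of_lt (by omega)]
  have hcard : ((Finset.range u).filter (fun m => (s' * u + m) % D = w)).card
      = if D ≤ (s' * B + (D - 1 - w)) % D + u then 1 else 0 := by
    rw [hfilter, hX]
    by_cases h : m₀ < u
    · rw [if_pos h, if_pos (by omega)]
      simp
    · rw [if_neg h, if_neg (by omega)]
      simp
  rw [hcard]
  by_cases hcase : D ≤ (s' * B + (D - 1 - w)) % D + u
  · rw [if_pos hcase] at hAdd ⊢
    generalize (s' * B + (D - 1 - w) + B) / D = R at hAdd ⊢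
    generalize (s' * B + (D - 1 - w)) / D = L at hAdd ⊢
    generalize B / D = qq at hAdd ⊢
    omega
  · rw [if_neg hcase] at hAdd ⊢
    generalize (s' * B + (D - 1 - w) + B) / D = R at hAdd ⊢
    generalize (s' * B + (D - 1 - w)) / D = L at hAdd ⊢
    generalize B / D = qq at hAdd ⊢
    omega

end Counting

section Counting2

lemma mul_le_mul_add_iff {P x y ρ : ℕ} (hρ : ρ < P) : x * P ≤ y * P + ρ ↔ x ≤ y := by
  constructor
  · intro h
    by_contra hc
    have h2 : (y + 1) * P ≤ x * P := Nat.mul_le_mul_right P (by omega)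
    have h3 : (y + 1) * P = y * P + P := by ring
    omega
  · intro h
    have := Nat.mul_le_mul_right P h
    omega

lemma mul_add_lt_mul_iff {P x y ρ : ℕ} (hρ : ρ < P) : x * P + ρ < y * P ↔ x < y := by
  constructor
  · intro h
    by_contra hc
    have h2 : y * P ≤ x * P := Nat.mul_le_mul_right P (by omega)
    omega
  · intro h
    have h2 : (x + 1) * P ≤ y * P := Nat.mul_le_mul_right P (by omega)
    have h3 : (x + 1) * P = x * P + P := by ring
    omega

lemma cond_equiv {P B D s' r c : ℕ} (hP : 0 < P) (hB : 0 < B)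
    (hρ : 0 < r * D % P) :
    ((r + c * P) * D / (P * B) = s') ↔
      (s' * B ≤ c * D + r * D / P ∧ c * D + r * D / P < s' * B + B) := by
  have hρlt : r * D % P < P := Nat.mod_lt _ hP
  have h1 : r * D = (r * D / P) * P + r * D % P := by
    have h0 := Nat.div_add_mod (r * D) P
    have hcm : P * (r * D / P) = (r * D / P) * P := Nat.mul_comm _ _
    omega
  have hXe : (r + c * P) * D = (c * D + r * D / P) * P + r * D % P := by
    calc (r + c * P) * D = r * D + (c * D) * P := by ring
      _ = (c * D + r * D / P) * P + r * D % P := by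
          have hexpand : (c * D + r * D / P) * P = (c * D) * P + (r * D / P) * P := by ring
          omega
  constructor
  · intro h
    have hdm := Nat.div_add_mod ((r + c * P) * D) (P * B)
    rw [h] at hdm
    have hmlt : (r + c * P) * D % (P * B) < P * B := Nat.mod_lt _ (Nat.mul_pos hP hB)
    -- (r+c*P)*D = (P*B)*s' + rem
    have hlow : (s' * B) * P ≤ (c * D + r * D / P) * P + r * D % P := by
      calc (s' * B) * P = P * B * s' := by ring
        _ ≤ (r + c * P) * D := by omega
        _ = _ := hXe
    have hhigh : (c * D + r * D / P) * P + r * D % P < (s' * B + B) * P := by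
      calc (c * D + r * D / P) * P + r * D % P = (r + c * P) * D := hXe.symm
        _ < P * B * s' + P * B := by omega
        _ = (s' * B + B) * P := by ring
    exact ⟨(mul_le_mul_add_iff hρlt).mp hlow, (mul_add_lt_mul_iff hρlt).mp hhigh⟩
  · rintro ⟨hlo, hhi⟩
    refine Nat.div_eq_of_lt_le ?_ ?_
    · calc s' * (P * B) = (s' * B) * P := by ring
        _ ≤ (c * D + r * D / P) * P := Nat.mul_le_mul_right P hlo
        _ ≤ (r + c * P) * D := by omega
    · calc (r + c * P) * D = (c * D + r * D / P) * P + r * D % P := hXe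
        _ < (s' * B + B) * P := (mul_add_lt_mul_iff hρlt).mpr hhi
        _ = (s' + 1) * (P * B) := by ring

lemma sum_range_mul {M : Type*} [AddCommMonoid M] (f : ℕ → M) (B N : ℕ) :
    ∑ l' ∈ Finset.range (B * N), f l'
      = ∑ i ∈ Finset.range B, ∑ l ∈ Finset.range N, f (i * N + l) := by
  induction B with
  | zero => simp
  | succ B ih =>
    rw [Finset.sum_range_succ, ← ih, show (B + 1) * N = B * N + N by ring,
      Finset.sum_range_add]

lemma fiber_sum {M : Type*} [AddCommMonoid M] (f : ℕ → M)
    {g a P B N Q l : ℕ} (hQP : Q = P * B) (hP : 0 < P) (hB : 0 < B) (hN : 0 < N)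
    (hgNP : g ^ N ≡ 1 [MOD P])
    (hMdvd : ∀ n, g ^ n ≡ 1 [MOD Q] → B * N ∣ n)
    (hcopaQ : Nat.Coprime a Q) (hcopgQ : Nat.Coprime g Q) :
    ∑ i ∈ Finset.range B, f (a * g ^ (i * N + l) % Q)
      = ∑ c ∈ Finset.range B, f (a * g ^ l % P + c * P) := by
  have hQpos : 0 < Q := by rw [hQP]; exact Nat.mul_pos hP hB
  set φ : ℕ → ℕ := fun i => (a * g ^ (i * N + l) % Q) / P with hφ
  have hmodP : ∀ i : ℕ, a * g ^ (i * N + l) % Q % P = a * g ^ l % P := by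
    intro i
    rw [Nat.mod_mod_of_dvd _ ⟨B, hQP⟩]
    have hsplit : a * g ^ (i * N + l) = (a * g ^ l) * (g ^ N) ^ i := by
      rw [pow_add, show i * N = N * i from Nat.mul_comm i N, pow_mul]
      ring
    have hmod : (a * g ^ l) * (g ^ N) ^ i ≡ (a * g ^ l) * 1 [MOD P] :=
      Nat.ModEq.mul_left _ (by simpa using hgNP.pow i)
    calc a * g ^ (i * N + l) % P = (a * g ^ l) * (g ^ N) ^ i % P := by rw [hsplit]
      _ = (a * g ^ l) * 1 % P := hmod
      _ = a * g ^ l % P := by rw [Nat.mul_one]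
  have hdecomp : ∀ i : ℕ, a * g ^ (i * N + l) % Q = a * g ^ l % P + φ i * P := by
    intro i
    have h1 := Nat.div_add_mod (a * g ^ (i * N + l) % Q) P
    have h2 := hmodP i
    have h3 : P * (a * g ^ (i * N + l) % Q / P) = φ i * P := Nat.mul_comm _ _
    omega
  have hφlt : ∀ i : ℕ, φ i < B := by
    intro i
    have h1 : a * g ^ (i * N + l) % Q < Q := Nat.mod_lt _ hQpos
    have hQBP : Q = B * P := by rw [hQP]; ring
    have h2 : a * g ^ (i * N + l) % Q < B * P := by rw [← hQBP]; exact h1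
    exact (Nat.div_lt_iff_lt_mul hP).mpr h2
  have hinj : Set.InjOn φ (Finset.range B) := by
    have key : ∀ i i', i < B → i' < B → i ≤ i' → φ i = φ i' → i = i' := by
      intro i i' hi hi' hle heq
      have hxeq : a * g ^ (i * N + l) % Q = a * g ^ (i' * N + l) % Q := by
        rw [hdecomp i, hdecomp i', heq]
      have hexp : i' * N + l = (i * N + l) + (i' - i) * N := by
        have hx : (i' - i) * N + i * N = i' * N := by
          rw [← Nat.add_mul]
          congr 1
          omega
        omega
      have hsplit : a * g ^ (i' * N + l) = (a * g ^ (i * N + l)) * g ^ ((i' - i) * N) := by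
        rw [hexp, pow_add]
        ring
      have hmm : a * g ^ (i' * N + l) ≡ a * g ^ (i * N + l) [MOD Q] := hxeq.symm
      have hcnc : (a * g ^ (i * N + l)) * g ^ ((i' - i) * N)
          ≡ (a * g ^ (i * N + l)) * 1 [MOD Q] := by
        rw [← hsplit, Nat.mul_one]
        exact hmm
      have hcop : Nat.gcd Q (a * g ^ (i * N + l)) = 1 := by
        have hco : Nat.Coprime (a * g ^ (i * N + l)) Q :=
          Nat.Coprime.mul hcopaQ (Nat.Coprime.pow_left _ hcopgQ)
        exact Nat.coprime_comm.mp hco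
      have hone : g ^ ((i' - i) * N) ≡ 1 [MOD Q] :=
        Nat.ModEq.cancel_left_of_coprime hcop hcnc
      obtain ⟨cc, hcc⟩ := hMdvd _ hone
      have hNc : i' - i = B * cc := by
        refine Nat.eq_of_mul_eq_mul_right hN ?_
        rw [hcc]
        ring
      rcases Nat.eq_zero_or_pos cc with rfl | hcpos
      · simp at hNc; omega
      · have hBc : B ≤ B * cc := Nat.le_mul_of_pos_right B hcpos
        omega
    intro i hi i' hi' heq
    simp only [Finset.coe_range, Set.mem_Iio] at hi hi'
    rcases Nat.le_total i i' with h | h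
    · exact key i i' hi hi' h heq
    · exact (key i' i hi' hi h heq.symm).symm
  have himage : (Finset.range B).image φ = Finset.range B := by
    refine Finset.eq_of_subset_of_card_le ?_ ?_
    · intro c hc
      obtain ⟨i, hi, rfl⟩ := Finset.mem_image.mp hc
      exact Finset.mem_range.mpr (hφlt i)
    · rw [Finset.card_image_of_injOn hinj]
  calc ∑ i ∈ Finset.range B, f (a * g ^ (i * N + l) % Q)
      = ∑ i ∈ Finset.range B, f (a * g ^ l % P + φ i * P) := by
        refine Finset.sum_congr rfl fun i _ => ?_
        rw [hdecomp i]
    _ = ∑ c ∈ (Finset.range B).image φ, f (a * g ^ l % P + c * P) := by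
        rw [Finset.sum_image (fun i hi i' hi' h => hinj hi hi' h)]
    _ = ∑ c ∈ Finset.range B, f (a * g ^ l % P + c * P) := by rw [himage]

end Counting2

/-- For `t ≥ 1` and `k ≥ c_g(b)`, with `u_t = b^t mod g^j`, the frequency
transition formula holds:
`ν_{k+t}(s') = ⌊b^t/g^j⌋·ord_g(b^k) + Σ_{m=0}^{u_t−1} ν_k((s'·u_t + m) mod g^j)`. -/
theorem frequency_transition (g b a j t k : ℕ) (hg : 2 ≤ g) (hb : 1 < b)
    (hbg : Nat.gcd b g = 1) (ha : 0 < a) (hab : Nat.gcd a b = 1) (hak : a < b ^ k)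
    (hj : 1 ≤ j) (ht : 1 ≤ t) (hk : cg g b ≤ k) :
    ∀ s' : ℕ, s' < g ^ j →
      nu g b a j (k + t) s'
        = b ^ t / g ^ j * ordg g (b ^ k)
          + ∑ m ∈ Finset.range (b ^ t % g ^ j),
              nu g b a j k ((s' * (b ^ t % g ^ j) + m) % g ^ j) := by
  intro s' hs'
  have hgb : Nat.Coprime g b := Nat.coprime_comm.mp hbg
  have hab' : Nat.Coprime a b := hab
  have hk1 : 1 ≤ k := by
    rcases Nat.eq_zero_or_pos k with rfl | h
    · rw [pow_zero] at hak; omega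
    · exact h
  have hPpos : 0 < b ^ k := Nat.pow_pos (by omega)
  have hP1 : 1 < b ^ k := by
    calc 1 < b := hb
      _ ≤ b ^ k := Nat.le_self_pow (by omega) b
  have hBpos : 0 < b ^ t := Nat.pow_pos (by omega)
  have hDpos : 0 < g ^ j := Nat.pow_pos (by omega)
  have hQpos : 0 < b ^ (k + t) := Nat.pow_pos (by omega)
  have hgP : Nat.Coprime g (b ^ k) := Nat.Coprime.pow_right _ hgb
  have hgQ : Nat.Coprime g (b ^ (k + t)) := Nat.Coprime.pow_right _ hgb
  have haQ : Nat.Coprime a (b ^ (k + t)) := Nat.Coprime.pow_right _ hab'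
  have hNpos : 0 < ordg g (b ^ k) := ordg_pos hgP hPpos
  have hMpos : 0 < ordg g (b ^ (k + t)) := ordg_pos hgQ hQpos
  have hgN : g ^ ordg g (b ^ k) ≡ 1 [MOD b ^ k] := ordg_modEq hgP hPpos
  have hMQ : ordg g (b ^ (k + t)) = b ^ t * ordg g (b ^ k) :=
    ord_scale hg hb hgb hk (by omega)
  have hQP : b ^ (k + t) = b ^ k * b ^ t := pow_add b k t
  have hMdvd : ∀ n, g ^ n ≡ 1 [MOD b ^ (k + t)] → b ^ t * ordg g (b ^ k) ∣ n := by
    intro n hn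
    rw [← hMQ]
    exact ordg_dvd_of_modEq hgQ hQpos hn
  have hPD : Nat.Coprime (b ^ k) (g ^ j) := Nat.Coprime.pow _ _ hbg
  have hcoprl : ∀ l : ℕ, Nat.Coprime (a * g ^ l) (b ^ k) :=
    fun l => Nat.Coprime.mul (Nat.Coprime.pow_right _ hab')
      (Nat.Coprime.pow_right _ (Nat.Coprime.pow_left _ hgb))
  have hrpos : ∀ l : ℕ, 0 < (a * g ^ l % b ^ k) * g ^ j % b ^ k := by
    intro l
    rcases Nat.eq_zero_or_pos ((a * g ^ l % b ^ k) * g ^ j % b ^ k) with h0 | h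
    · exfalso
      have hdvd : b ^ k ∣ (a * g ^ l % b ^ k) * g ^ j := Nat.dvd_of_mod_eq_zero h0
      have hdr : b ^ k ∣ a * g ^ l % b ^ k := Nat.Coprime.dvd_of_dvd_mul_right hPD hdvd
      have hlt : a * g ^ l % b ^ k < b ^ k := Nat.mod_lt _ hPpos
      have hr0 : a * g ^ l % b ^ k = 0 := by
        rcases Nat.eq_zero_or_pos (a * g ^ l % b ^ k) with h1 | h1
        · exact h1
        · exact absurd (Nat.le_of_dvd h1 hdr) (by omega)
      have hdvd2 : b ^ k ∣ a * g ^ l := Nat.dvd_of_mod_eq_zero hr0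
      have hgcd : b ^ k ∣ Nat.gcd (a * g ^ l) (b ^ k) := Nat.dvd_gcd hdvd2 dvd_rfl
      rw [hcoprl l] at hgcd
      have := Nat.le_of_dvd (by omega) hgcd
      omega
    · exact h
  have hwlt : ∀ l : ℕ, (a * g ^ l % b ^ k) * g ^ j / b ^ k < g ^ j := by
    intro l
    rw [Nat.div_lt_iff_lt_mul hPpos]
    calc (a * g ^ l % b ^ k) * g ^ j < b ^ k * g ^ j :=
        (Nat.mul_lt_mul_right hDpos).mpr (Nat.mod_lt _ hPpos)
      _ = g ^ j * b ^ k := Nat.mul_comm _ _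
  have hfiber : ∀ l : ℕ, (∑ i ∈ Finset.range (b ^ t),
      if a * g ^ (i * ordg g (b ^ k) + l) % b ^ (k + t) * g ^ j / b ^ (k + t) = s'
        then 1 else 0)
      = ∑ c ∈ Finset.range (b ^ t),
        if (a * g ^ l % b ^ k + c * b ^ k) * g ^ j / b ^ (k + t) = s' then 1 else 0 :=
    fun l => fiber_sum (fun x => if x * g ^ j / b ^ (k + t) = s' then 1 else 0)
      hQP hPpos hBpos hNpos hgN hMdvd haQ hgQ
  have hinner : ∀ l : ℕ,
      (∑ c ∈ Finset.range (b ^ t),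
        if (a * g ^ l % b ^ k + c * b ^ k) * g ^ j / (b ^ k * b ^ t) = s' then 1 else 0)
      = b ^ t / g ^ j
        + ((Finset.range (b ^ t % g ^ j)).filter
            (fun m => (s' * (b ^ t % g ^ j) + m) % g ^ j
              = (a * g ^ l % b ^ k) * g ^ j / b ^ k)).card := by
    intro l
    rw [← Finset.card_filter]
    rw [Finset.filter_congr (fun c _ => cond_equiv hPpos hBpos (hrpos l))]
    exact core_count hDpos hBpos hs' (hwlt l)
  have hnu : ∀ m : ℕ, nu g b a j k ((s' * (b ^ t % g ^ j) + m) % g ^ j)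
      = ((Finset.range (ordg g (b ^ k))).filter
          (fun l => (s' * (b ^ t % g ^ j) + m) % g ^ j
            = (a * g ^ l % b ^ k) * g ^ j / b ^ k)).card := by
    intro m
    rw [nu_eq_card hNpos hPpos hDpos]
    congr 1
    apply Finset.filter_congr
    intro l _
    exact eq_comm
  rw [nu_eq_card hMpos hQpos hDpos s', Finset.card_filter, hMQ, sum_range_mul,
    Finset.sum_comm]
  calc ∑ l ∈ Finset.range (ordg g (b ^ k)), ∑ i ∈ Finset.range (b ^ t),
        (if a * g ^ (i * ordg g (b ^ k) + l) % b ^ (k + t) * g ^ j / b ^ (k + t) = s'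
          then 1 else 0)
      = ∑ l ∈ Finset.range (ordg g (b ^ k)), ∑ c ∈ Finset.range (b ^ t),
        (if (a * g ^ l % b ^ k + c * b ^ k) * g ^ j / (b ^ k * b ^ t) = s'
          then 1 else 0) := by
        rw [← hQP]
        exact Finset.sum_congr rfl fun l _ => hfiber l
    _ = ∑ l ∈ Finset.range (ordg g (b ^ k)), (b ^ t / g ^ j
        + ((Finset.range (b ^ t % g ^ j)).filter
            (fun m => (s' * (b ^ t % g ^ j) + m) % g ^ j
              = (a * g ^ l % b ^ k) * g ^ j / b ^ k)).card) :=
        Finset.sum_congr rfl fun l _ => hinner l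
    _ = (∑ _l ∈ Finset.range (ordg g (b ^ k)), b ^ t / g ^ j)
        + ∑ l ∈ Finset.range (ordg g (b ^ k)),
            ((Finset.range (b ^ t % g ^ j)).filter
              (fun m => (s' * (b ^ t % g ^ j) + m) % g ^ j
                = (a * g ^ l % b ^ k) * g ^ j / b ^ k)).card :=
        Finset.sum_add_distrib
    _ = b ^ t / g ^ j * ordg g (b ^ k)
        + ∑ m ∈ Finset.range (b ^ t % g ^ j),
            nu g b a j k ((s' * (b ^ t % g ^ j) + m) % g ^ j) := by
        congr 1
        · rw [Finset.sum_const, Finset.card_range, smul_eq_mul, Nat.mul_comm]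
        · calc ∑ l ∈ Finset.range (ordg g (b ^ k)),
                ((Finset.range (b ^ t % g ^ j)).filter
                  (fun m => (s' * (b ^ t % g ^ j) + m) % g ^ j
                    = (a * g ^ l % b ^ k) * g ^ j / b ^ k)).card
              = ∑ l ∈ Finset.range (ordg g (b ^ k)), ∑ m ∈ Finset.range (b ^ t % g ^ j),
                  (if (s' * (b ^ t % g ^ j) + m) % g ^ j
                    = (a * g ^ l % b ^ k) * g ^ j / b ^ k then 1 else 0) :=
                Finset.sum_congr rfl fun l _ => Finset.card_filter _ _
            _ = ∑ m ∈ Finset.range (b ^ t % g ^ j), ∑ l ∈ Finset.range (ordg g (b ^ k)),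
                  (if (s' * (b ^ t % g ^ j) + m) % g ^ j
                    = (a * g ^ l % b ^ k) * g ^ j / b ^ k then 1 else 0) :=
                Finset.sum_comm
            _ = ∑ m ∈ Finset.range (b ^ t % g ^ j),
                  nu g b a j k ((s' * (b ^ t % g ^ j) + m) % g ^ j) := by
                refine Finset.sum_congr rfl fun m _ => ?_
                rw [hnu m, Finset.card_filter]
end

section
/- Let g ≥ 2 be an integer and b > 1 an integer having at least one prime factor that does not divide g. Let (a_k)_{k≥1} be a sequence of positive integers with gcd(a_k, b) = 1 for all k, and let j ≥ 1. For each k and each s ∈ {0,…,g^j−1}, the limiting relative frequency d_k(s) = lim_{N→∞} (1/N)·#{ i : j ≤ i ≤ N and ⌊a_k·g^i/b^k⌋ mod g^j = s } exists (the g-ary expansion of a_k/b^k being eventually periodic), and for every s ∈ {0,…,g^j−1} one has d_k(s) → 1/g^j as k → ∞. -/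
open Finset Filter



lemma geom_nat (x : ℕ) (hx : 1 ≤ x) (n : ℕ) :
    (x - 1) * ∑ i ∈ range n, x ^ i = x ^ n - 1 := by
  induction n with
  | zero => simp
  | succ n ih =>
    rw [sum_range_succ, Nat.mul_add, ih]
    have h1 : 1 ≤ x ^ n := Nat.one_le_pow _ _ hx
    have h2 : x ^ n ≤ x ^ (n + 1) := Nat.pow_le_pow_right hx (by omega)
    have h3 : (x - 1) * x ^ n = x * x ^ n - x ^ n := by
      rw [Nat.sub_mul, one_mul]
    rw [h3, ← pow_succ']
    omega

lemma int_binom (M : ℤ) (r : ℕ) : (M ^ 2 : ℤ) ∣ (1 + M) ^ r - 1 - r * M := by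
  induction r with
  | zero => simp
  | succ r ih =>
    have key : (1 + M) ^ (r + 1) - 1 - (r + 1 : ℕ) * M
        = (1 + M) * ((1 + M) ^ r - 1 - r * M) + r * M ^ 2 := by
      push_cast; ring
    rw [key]
    exact dvd_add (Dvd.dvd.mul_left ih _) (Dvd.dvd.mul_left dvd_rfl _)

lemma lift_step {d y : ℕ} (i : ℕ) (hy : 1 ≤ y) (h : d ^ (i + 1) ∣ y - 1) :
    d ^ (i + 2) ∣ y ^ d - 1 := by
  have hy' : (1 : ℤ) ≤ (y : ℤ) := by exact_mod_cast hy
  have hyd : 1 ≤ y ^ d := Nat.one_le_pow _ _ (by omega)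
  have h' : (d : ℤ) ^ (i + 1) ∣ (y : ℤ) - 1 := by
    have := Int.natCast_dvd_natCast.mpr h
    push_cast [Nat.cast_sub hy] at this ⊢
    exact_mod_cast this
  rw [← Int.natCast_dvd_natCast]
  push_cast [Nat.cast_sub hyd]
  set M : ℤ := (y : ℤ) - 1 with hM
  have hyM : (y : ℤ) = 1 + M := by omega
  have hbin := int_binom M d
  have h1 : (d : ℤ) ^ (i + 2) ∣ (d : ℤ) * M := by
    rw [pow_succ, mul_comm ((d:ℤ)^(i+1)) (d:ℤ)]
    exact mul_dvd_mul_left _ h'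
  have h2 : (d : ℤ) ^ (i + 2) ∣ M ^ 2 := by
    calc (d : ℤ) ^ (i + 2) ∣ (d : ℤ) ^ (2 * (i + 1)) := pow_dvd_pow _ (by omega)
    _ = ((d : ℤ) ^ (i+1)) ^ 2 := by ring
    _ ∣ M ^ 2 := pow_dvd_pow_of_dvd h' 2
  have : (y : ℤ) ^ d - 1 = ((1 + M) ^ d - 1 - d * M) + d * M := by rw [← hyM]; ring
  rw [this]
  exact dvd_add (dvd_trans h2 hbin) h1





lemma lift_all {r y : ℕ} (hy : 1 ≤ y) (h : r ∣ y - 1) (i : ℕ) :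
    r ^ (i + 1) ∣ y ^ (r ^ i) - 1 := by
  induction i with
  | zero => simpa using h
  | succ i ih =>
    have h1 : 1 ≤ y ^ (r ^ i) := Nat.one_le_pow _ _ (by omega)
    have h2 := lift_step i h1 ih
    rwa [← pow_mul, ← pow_succ] at h2

-- sum of x^i over i < u is ≡ u mod p when x ≡ 1 mod p
lemma sum_pow_mod (x u p : ℕ) (hx : x % p = 1 % p) :
    (∑ i ∈ range u, x ^ i) % p = u % p := by
  induction u with
  | zero => simp
  | succ u ih =>
    rw [sum_range_succ, Nat.add_mod, ih]
    have hxu : x ^ u % p = 1 % p := by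
      calc x ^ u % p = (x % p) ^ u % p := by rw [Nat.pow_mod]
        _ = (1 % p) ^ u % p := by rw [hx]
        _ = 1 ^ u % p := by rw [← Nat.pow_mod]
        _ = 1 % p := by rw [one_pow]
    rw [hxu, ← Nat.add_mod, Nat.add_comm u 1]

-- C1
lemma fact_pow_coprime {p x u : ℕ} (hp : p.Prime) (hx : 2 ≤ x) (hu : ¬ p ∣ u) (hu0 : u ≠ 0)
    (hxp : x % p = 1 % p) :
    (x ^ u - 1).factorization p = (x - 1).factorization p := by
  have hgeom := geom_nat x (by omega) u
  set S := ∑ i ∈ range u, x ^ i with hSdef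
  have hS : ¬ p ∣ S := by
    intro hdvd
    apply hu
    rw [Nat.dvd_iff_mod_eq_zero] at hdvd ⊢
    rw [sum_pow_mod x u p hxp] at hdvd
    exact hdvd
  have hS0 : S ≠ 0 := by
    intro h0
    exact hS (h0 ▸ dvd_zero p)
  have hx10 : x - 1 ≠ 0 := by omega
  rw [← hgeom, Nat.factorization_mul hx10 hS0]
  simp [Nat.factorization_eq_zero_of_not_dvd hS]

-- C2
lemma fact_pow_p {p x : ℕ} (hp : p.Prime) (hx : 2 ≤ x) (hxp : x % p ^ 2 = 1 % p ^ 2) :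
    (x ^ p - 1).factorization p = (x - 1).factorization p + 1 := by
  have hp2 : 2 ≤ p := hp.two_le
  have hgeom := geom_nat x (by omega) p
  set S := ∑ i ∈ range p, x ^ i with hSdef
  -- S ≡ p mod p^2
  have hSmod : S % p ^ 2 = p % p ^ 2 := sum_pow_mod x p (p ^ 2) hxp
  have hpp2 : p < p ^ 2 := by nlinarith
  have hSm : S % p ^ 2 = p := by rw [hSmod, Nat.mod_eq_of_lt hpp2]
  have hSp : p ∣ S := by
    have h2 : S = p ^ 2 * (S / p ^ 2) + p := by
      conv_lhs => rw [← Nat.div_add_mod S (p ^ 2)]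
      rw [hSm]
    refine ⟨p * (S / p ^ 2) + 1, ?_⟩
    calc S = p ^ 2 * (S / p ^ 2) + p := h2
      _ = p * (p * (S / p ^ 2) + 1) := by ring
  have hSp2 : ¬ p ^ 2 ∣ S := by
    intro hdvd
    have h0 : S % p ^ 2 = 0 := by rwa [Nat.dvd_iff_mod_eq_zero] at hdvd
    rw [hSmod, Nat.mod_eq_of_lt hpp2] at h0
    omega
  have hS0 : S ≠ 0 := by
    have : 0 < S := Finset.sum_pos (fun i _ => pow_pos (by omega : 0 < x) i)
      (Finset.nonempty_range_iff.mpr (by omega))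
    omega
  -- factorization of S at p is exactly 1
  have hfS : S.factorization p = 1 := by
    have h1 : 1 ≤ S.factorization p := by
      rw [← hp.pow_dvd_iff_le_factorization hS0, pow_one]; exact hSp
    have h2 : S.factorization p < 2 := by
      by_contra hcon
      push_neg at hcon
      exact hSp2 ((hp.pow_dvd_iff_le_factorization hS0).mpr hcon)
    omega
  have hx10 : x - 1 ≠ 0 := by omega
  rw [← hgeom, Nat.factorization_mul hx10 hS0, Finsupp.add_apply, hfS]

-- C3: main LTE lemma
lemma fact_pow_lte {p : ℕ} (hp : p.Prime) :
    ∀ n, n ≠ 0 → ∀ x, 2 ≤ x → x % p ^ 2 = 1 % p ^ 2 →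
    (x ^ n - 1).factorization p = (x - 1).factorization p + n.factorization p := by
  intro n
  induction n using Nat.strong_induction_on with
  | _ n ih =>
    intro hn0 x hx hxp
    by_cases hpn : p ∣ n
    · obtain ⟨n', rfl⟩ := hpn
      have hp2 : 2 ≤ p := hp.two_le
      have hn'0 : n' ≠ 0 := by rintro rfl; simp at hn0
      have hn'lt : n' < p * n' := by
        calc n' = 1 * n' := (one_mul n').symm
        _ < p * n' := by
          apply Nat.mul_lt_mul_of_lt_of_le (by omega) (le_refl n') (by omega)
      have hxppow : x ^ p % p ^ 2 = 1 % p ^ 2 := by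
        have : x ^ p % p ^ 2 = (x % p ^ 2) ^ p % p ^ 2 := by rw [Nat.pow_mod]
        rw [this, hxp, ← Nat.pow_mod, one_pow]
      have hxp2 : 2 ≤ x ^ p := by
        calc 2 ≤ x := hx
        _ = x ^ 1 := (pow_one x).symm
        _ ≤ x ^ p := Nat.pow_le_pow_right (by omega) (by omega)
      have h1 : (x ^ (p * n') - 1).factorization p
          = (x ^ p - 1).factorization p + n'.factorization p := by
        rw [pow_mul]
        exact ih n' hn'lt hn'0 (x ^ p) hxp2 hxppow
      have h2 := fact_pow_p hp hx hxp
      have h3 : (p * n').factorization p = 1 + n'.factorization p := by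
        rw [Nat.factorization_mul (by omega) hn'0, Finsupp.add_apply, hp.factorization_self]
      rw [h1, h2, h3]
      omega
    · have hxp1 : x % p = 1 % p := by
        have hd : p ∣ p ^ 2 := dvd_pow_self p (by omega)
        rw [← Nat.mod_mod_of_dvd x hd, hxp, Nat.mod_mod_of_dvd 1 hd]
      rw [fact_pow_coprime hp hx hpn hn0 hxp1, Nat.factorization_eq_zero_of_not_dvd hpn]
      omega


lemma sum_range_add' (F : ℕ → ℕ) (a b : ℕ) :
    ∑ n ∈ range (a + b), F n = ∑ n ∈ range a, F n + ∑ u ∈ range b, F (a + u) := by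
  rw [range_eq_Ico, ← Finset.sum_Ico_consecutive F (Nat.zero_le a) (Nat.le_add_right a b)]
  congr 1
  all_goals simp [Finset.sum_Ico_eq_sum_range]

lemma sum_grid (F : ℕ → ℕ) (a : ℕ) : ∀ b : ℕ,
    ∑ n ∈ range (a * b), F n = ∑ t ∈ range b, ∑ u ∈ range a, F (a * t + u) := by
  intro b
  induction b with
  | zero => simp
  | succ b ih =>
    rw [Nat.mul_succ, sum_range_add', ih, sum_range_succ]

lemma sum_periodic (G : ℕ → ℕ) (P : ℕ) (hper : ∀ t, G (t + P) = G t) : ∀ R : ℕ,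
    ∑ t ∈ range (P * R), G t = R * ∑ t ∈ range P, G t := by
  have hshift : ∀ q t, G (t + P * q) = G t := by
    intro q
    induction q with
    | zero => simp
    | succ q ihq =>
      intro t
      rw [Nat.mul_succ, ← Nat.add_assoc, hper (t + P * q), ihq]
  intro R
  induction R with
  | zero => simp
  | succ R ih =>
    rw [Nat.mul_succ, sum_range_add', ih, Nat.succ_mul]
    congr 1
    apply Finset.sum_congr rfl
    intro u _
    rw [Nat.add_comm (P * R) u, hshift R u]


lemma div_eq_iff_interval {m v s : ℕ} (hm : 0 < m) :
    v / m = s ↔ s * m ≤ v ∧ v < (s + 1) * m := by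
  constructor
  · rintro rfl
    refine ⟨Nat.div_mul_le_self v m, ?_⟩
    have h1 : v / m * m + v % m = v := Nat.div_add_mod' v m
    have h2 : v % m < m := Nat.mod_lt v hm
    calc v = v / m * m + v % m := h1.symm
      _ < v / m * m + m := by omega
      _ = (v / m + 1) * m := by ring
  · rintro ⟨h1, h2⟩
    have hle : s ≤ v / m := (Nat.le_div_iff_mul_le hm).mpr h1
    have hlt : v / m < s + 1 := (Nat.div_lt_iff_lt_mul hm).mpr h2
    omega

lemma interval_count (g j s D P m ρ : ℕ) (hg : 1 ≤ g) (hm : m = D * P) (hD : 1 ≤ D)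
    (hP : 1 ≤ P) (hρ : ρ < D) (hsj : s < g ^ j) :
    (∑ z ∈ range P, if g ^ j * (ρ + D * z) / m = s then 1 else 0) * g ^ j ≤ P + 2 * g ^ j ∧
    P ≤ (∑ z ∈ range P, if g ^ j * (ρ + D * z) / m = s then 1 else 0) * g ^ j + 2 * g ^ j := by
  have hm0 : 0 < m := by rw [hm]; positivity
  have hgj : 1 ≤ g ^ j := Nat.one_le_pow _ _ hg
  set T : Finset ℕ := (range P).filter (fun z => g ^ j * (ρ + D * z) / m = s) with hT
  have hLT : (∑ z ∈ range P, if g ^ j * (ρ + D * z) / m = s then 1 else 0) = T.card := by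
    rw [hT, Finset.card_filter]
  rw [hLT]
  have hgood : ∀ z, g ^ j * (ρ + D * z) / m = s ↔
      s * m ≤ g ^ j * (ρ + D * z) ∧ g ^ j * (ρ + D * z) < (s + 1) * m :=
    fun z => div_eq_iff_interval hm0
  constructor
  · -- upper bound
    rcases Finset.eq_empty_or_nonempty T with hemp | hne
    · rw [hemp]; simp
    · set zmin := T.min' hne with hzmin
      set zmax := T.max' hne with hzmax
      have hminT := T.min'_mem hne
      have hmaxT := T.max'_mem hne
      have hmm : zmin ≤ zmax := T.min'_le zmax hmaxT
      obtain ⟨w, hw⟩ : ∃ w, zmax = zmin + w := ⟨zmax - zmin, by omega⟩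
      have hsub : T ⊆ Finset.Icc zmin zmax := fun z hz =>
        Finset.mem_Icc.mpr ⟨T.min'_le z hz, T.le_max' z hz⟩
      have hcard : T.card ≤ w + 1 := by
        have h := Finset.card_le_card hsub
        rw [Nat.card_Icc] at h
        omega
      have hgmin := (hgood zmin).mp (Finset.mem_filter.mp hminT).2
      have hgmax := (hgood zmax).mp (Finset.mem_filter.mp hmaxT).2
      have hkey : g ^ j * D * w < m := by
        have e1 : g ^ j * (ρ + D * zmax) = g ^ j * (ρ + D * zmin) + g ^ j * D * w := by
          rw [hw]; ring
        have e2 : (s + 1) * m = s * m + m := by ring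
        rw [e1, e2] at hgmax
        have := hgmin.1
        linarith [hgmax.2]
      have hgw : g ^ j * w < P := by
        have h1 : D * (g ^ j * w) < D * P := by
          calc D * (g ^ j * w) = g ^ j * D * w := by ring
            _ < m := hkey
            _ = D * P := hm
        exact Nat.lt_of_mul_lt_mul_left h1
      calc T.card * g ^ j ≤ (w + 1) * g ^ j := Nat.mul_le_mul_right _ hcard
        _ = g ^ j * w + g ^ j := by ring
        _ ≤ P + 2 * g ^ j := by linarith
  · -- lower bound
    obtain ⟨W, hW⟩ : ∃ W, W = P / g ^ j := ⟨_, rfl⟩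
    have hdm : g ^ j * W + P % g ^ j = P := by rw [hW]; exact Nat.div_add_mod P (g ^ j)
    have hmod : P % g ^ j < g ^ j := Nat.mod_lt P (by omega)
    have hex : ∃ z, s * m ≤ g ^ j * (ρ + D * z) := by
      refine ⟨s * m, ?_⟩
      calc s * m ≤ D * (s * m) := Nat.le_mul_of_pos_left _ (by omega)
        _ ≤ ρ + D * (s * m) := Nat.le_add_left _ _
        _ ≤ g ^ j * (ρ + D * (s * m)) := Nat.le_mul_of_pos_left _ (by omega)
    obtain ⟨zm, hzm⟩ : ∃ z, z = Nat.find hex := ⟨_, rfl⟩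
    have hlow : s * m ≤ g ^ j * (ρ + D * zm) := hzm ▸ Nat.find_spec hex
    have hVlt : g ^ j * (ρ + D * zm) < s * m + g ^ j * D := by
      rcases Nat.eq_zero_or_pos zm with h0 | hpos
      · rw [h0]
        have e0 : g ^ j * (ρ + D * 0) = g ^ j * ρ := by ring
        rw [e0]
        have h1 : g ^ j * ρ < g ^ j * D := mul_lt_mul_of_pos_left hρ (by positivity)
        linarith [Nat.zero_le (s * m)]
      · obtain ⟨z', hz'⟩ : ∃ z', zm = z' + 1 := ⟨zm - 1, by omega⟩
        have hmin' := Nat.find_min hex (show z' < Nat.find hex by omega)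
        push_neg at hmin'
        have e1 : g ^ j * (ρ + D * (z' + 1)) = g ^ j * (ρ + D * z') + g ^ j * D := by ring
        rw [hz', e1]
        linarith
    have hWub : g ^ j * D * W ≤ D * P := by
      have h1 : g ^ j * W ≤ P := Nat.le.intro hdm
      calc g ^ j * D * W = D * (g ^ j * W) := by ring
        _ ≤ D * P := Nat.mul_le_mul_left D h1
    have hgoodw : ∀ w < W, (zm + w) ∈ T := by
      intro w hwW
      have e1 : g ^ j * (ρ + D * (zm + w)) = g ^ j * (ρ + D * zm) + g ^ j * D * w := by ring
      have h3 : g ^ j * D * w + g ^ j * D = g ^ j * D * (w + 1) := by ring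
      have h4 : g ^ j * D * (w + 1) ≤ g ^ j * D * W := Nat.mul_le_mul_left _ (by omega)
      have h5 : (s + 1) * m = s * m + D * P := by rw [hm]; ring
      have h4b : g ^ j * D * W ≤ D * P := hWub
      have hup : g ^ j * (ρ + D * (zm + w)) < (s + 1) * m := by
        rw [e1]; linarith [hVlt, h3, h4, h5, hWub, Nat.zero_le (g ^ j * D * w)]
      have hlo : s * m ≤ g ^ j * (ρ + D * (zm + w)) := by
        rw [e1]; linarith [hlow, Nat.zero_le (g ^ j * D * w)]
      have hmem : zm + w < P := by
        have h6 : g ^ j * (D * (zm + w)) ≤ g ^ j * (ρ + D * (zm + w)) :=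
          Nat.mul_le_mul_left _ (Nat.le_add_left _ _)
        have h7 : (s + 1) * m ≤ g ^ j * (D * P) := by
          rw [hm]
          exact Nat.mul_le_mul_right _ (by omega)
        have h8 : g ^ j * (D * (zm + w)) < g ^ j * (D * P) := by linarith
        exact Nat.lt_of_mul_lt_mul_left (Nat.lt_of_mul_lt_mul_left h8)
      exact Finset.mem_filter.mpr ⟨Finset.mem_range.mpr hmem, (hgood _).mpr ⟨hlo, hup⟩⟩
    have hWcard : W ≤ T.card := by
      have himg : (range W).image (fun w => zm + w) ⊆ T := by
        intro x hx
        obtain ⟨w, hw1, rfl⟩ := Finset.mem_image.mp hx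
        exact hgoodw w (Finset.mem_range.mp hw1)
      have hcardimg : ((range W).image (fun w => zm + w)).card = W := by
        rw [Finset.card_image_of_injOn (fun x _ y _ h => by omega), Finset.card_range]
      calc W = ((range W).image (fun w => zm + w)).card := hcardimg.symm
        _ ≤ T.card := Finset.card_le_card himg
    have h9 : g ^ j * W ≤ g ^ j * T.card := Nat.mul_le_mul_left _ hWcard
    have h10 : g ^ j * T.card = T.card * g ^ j := by ring
    linarith


lemma cesaro (f : ℕ → Prop) [DecidablePred f] (j i1 Λ : ℕ) (hj : j ≤ i1) (hΛ : 0 < Λ)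
    (hper : ∀ i, i1 ≤ i → (f (i + Λ) ↔ f i)) :
    Filter.Tendsto (fun N : ℕ => (((Finset.Icc j N).filter f).card : ℝ) / N) Filter.atTop
      (nhds ((((Finset.Ico i1 (i1 + Λ)).filter f).card : ℝ) / Λ)) := by
  set F : ℕ → ℕ := fun i => if f i then 1 else 0 with hF
  set C : ℕ := ((Finset.Ico i1 (i1 + Λ)).filter f).card with hC
  set B0 : ℕ := ∑ i ∈ Finset.Ico j i1, F i with hB0
  have hCsum : C = ∑ i ∈ Finset.Ico i1 (i1 + Λ), F i := by
    rw [hC, Finset.card_filter]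
  -- block sums
  have block : ∀ d, ∑ i ∈ Finset.Ico (i1 + d * Λ) (i1 + d * Λ + Λ), F i = C := by
    intro d
    induction d with
    | zero => rw [hCsum]; norm_num
    | succ d ih =>
      rw [Finset.sum_Ico_eq_sum_range] at ih ⊢
      have harg : i1 + (d + 1) * Λ + Λ - (i1 + (d + 1) * Λ) = Λ := by omega
      have harg2 : i1 + d * Λ + Λ - (i1 + d * Λ) = Λ := by omega
      rw [harg] at *
      rw [harg2] at ih
      rw [← ih]
      apply Finset.sum_congr rfl
      intro w _
      have e1 : i1 + (d + 1) * Λ + w = (i1 + d * Λ + w) + Λ := by ring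
      rw [e1, hF]
      simp only []
      have := hper (i1 + d * Λ + w) (by omega)
      by_cases hfw : f (i1 + d * Λ + w)
      · rw [if_pos hfw, if_pos (this.mpr hfw)]
      · rw [if_neg hfw, if_neg (fun hcon => hfw (this.mp hcon))]
  have multiple : ∀ q, ∑ i ∈ Finset.Ico i1 (i1 + q * Λ), F i = q * C := by
    intro q
    induction q with
    | zero => simp
    | succ q ih =>
      have e1 : i1 + (q + 1) * Λ = i1 + q * Λ + Λ := by ring
      rw [e1, ← Finset.sum_Ico_consecutive F (show i1 ≤ i1 + q * Λ by omega)
        (show i1 + q * Λ ≤ i1 + q * Λ + Λ by omega), ih, block q]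
      ring
  -- main eventual bound
  set K : ℝ := B0 * Λ + Λ * Λ + C * (i1 + Λ + 1) with hK
  have hmain : ∀ᶠ N : ℕ in atTop,
      ‖(((Finset.Icc j N).filter f).card : ℝ) / N - (C : ℝ) / Λ‖ ≤ K / N := by
    filter_upwards [eventually_ge_atTop (i1 + 1)] with N hN
    set q : ℕ := (N + 1 - i1) / Λ with hq
    set ρ : ℕ := (N + 1 - i1) % Λ with hρ
    have hqρ : N + 1 = i1 + q * Λ + ρ := by
      have h1 := Nat.div_add_mod (N + 1 - i1) Λ
      have h2 : q * Λ = Λ * ((N + 1 - i1) / Λ) := by rw [hq]; ring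
      omega
    have hρΛ : ρ < Λ := Nat.mod_lt _ hΛ
    have hcnt : ((Finset.Icc j N).filter f).card
        = B0 + q * C + ∑ i ∈ Finset.Ico (i1 + q * Λ) (N + 1), F i := by
      rw [Finset.card_filter, ← Finset.Ico_add_one_right_eq_Icc,
        ← Finset.sum_Ico_consecutive F (show j ≤ i1 by omega)
          (show i1 ≤ N + 1 by omega),
        ← Finset.sum_Ico_consecutive F (show i1 ≤ i1 + q * Λ by omega)
          (show i1 + q * Λ ≤ N + 1 by omega), multiple q, ← hB0]
      omega
    obtain ⟨e, he⟩ : ∃ e, e = ∑ i ∈ Finset.Ico (i1 + q * Λ) (N + 1), F i := ⟨_, rfl⟩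
    rw [← he] at hcnt
    have heΛ : e ≤ Λ := by
      have h1 : e = ((Finset.Ico (i1 + q * Λ) (N + 1)).filter f).card := by
        rw [he, Finset.card_filter]
      rw [h1]
      calc ((Finset.Ico (i1 + q * Λ) (N + 1)).filter f).card
          ≤ (Finset.Ico (i1 + q * Λ) (N + 1)).card := Finset.card_filter_le _ _
        _ = (N + 1) - (i1 + q * Λ) := Nat.card_Ico _ _
        _ ≤ Λ := by omega
    have hN0 : (0 : ℝ) < N := by
      have : 1 ≤ N := by omega
      exact_mod_cast Nat.lt_of_lt_of_le Nat.zero_lt_one this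
    have hΛ0 : (0 : ℝ) < Λ := by exact_mod_cast hΛ
    have hNval : (N : ℝ) = i1 + q * Λ + ρ - 1 := by
      have : (N : ℝ) + 1 = i1 + q * Λ + ρ := by exact_mod_cast congrArg (Nat.cast : ℕ → ℝ) hqρ
      linarith
    have hcntR : (((Finset.Icc j N).filter f).card : ℝ) = B0 + q * C + e := by
      exact_mod_cast congrArg (Nat.cast : ℕ → ℝ) hcnt
    have habs : |(((Finset.Icc j N).filter f).card : ℝ) * Λ - C * N| ≤ K := by
      rw [hcntR, hNval]
      have h1 : ((B0 : ℝ) + q * C + e) * Λ - C * ((i1 : ℝ) + q * Λ + ρ - 1)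
          = B0 * Λ + e * Λ + C * (1 - i1 - ρ) := by ring
      rw [h1, hK]
      have c1 : (0:ℝ) ≤ B0 := Nat.cast_nonneg _
      have c2 : (0:ℝ) ≤ C := Nat.cast_nonneg _
      have c3 : (0:ℝ) ≤ e := Nat.cast_nonneg _
      have c4 : (0:ℝ) ≤ ρ := Nat.cast_nonneg _
      have c5 : (0:ℝ) ≤ i1 := Nat.cast_nonneg _
      have c6 : (e:ℝ) ≤ Λ := by exact_mod_cast heΛ
      have c7 : (ρ:ℝ) ≤ Λ := by
        have : ρ ≤ Λ := by omega
        exact_mod_cast this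
      rw [abs_le]
      constructor
      · nlinarith [mul_le_mul_of_nonneg_left c7 c2, mul_nonneg c2 c5, mul_nonneg c1 hΛ0.le]
      · nlinarith [mul_nonneg c2 c4, mul_nonneg c2 c5, mul_le_mul_of_nonneg_right c6 hΛ0.le]
    have heq : (((Finset.Icc j N).filter f).card : ℝ) / N - (C : ℝ) / Λ
        = ((((Finset.Icc j N).filter f).card : ℝ) * Λ - C * N) / (N * Λ) := by
      field_simp
    rw [Real.norm_eq_abs, heq, abs_div, abs_of_pos (by positivity : (0:ℝ) < (N:ℝ) * Λ)]
    have hK0 : 0 ≤ K := by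
      rw [hK]; exact add_nonneg (add_nonneg (mul_nonneg (Nat.cast_nonneg _) (Nat.cast_nonneg _)) (mul_nonneg (Nat.cast_nonneg _) (Nat.cast_nonneg _))) (mul_nonneg (Nat.cast_nonneg _) (add_nonneg (add_nonneg (Nat.cast_nonneg _) (Nat.cast_nonneg _)) zero_le_one))
    have hΛ1 : (1:ℝ) ≤ Λ := by exact_mod_cast hΛ
    have hNle : (N:ℝ) ≤ (N:ℝ) * Λ := le_mul_of_one_le_right hN0.le hΛ1
    calc |(((Finset.Icc j N).filter f).card : ℝ) * Λ - C * N| / ((N:ℝ) * Λ)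
        ≤ K / ((N:ℝ) * Λ) := by
          apply div_le_div_of_nonneg_right habs (by positivity)
      _ ≤ K / N := div_le_div_of_nonneg_left hK0 hN0 hNle
  have hzero : Tendsto (fun N : ℕ =>
      (((Finset.Icc j N).filter f).card : ℝ) / N - (C : ℝ) / Λ) atTop (nhds 0) :=
    squeeze_zero_norm' hmain (tendsto_const_div_atTop_nhds_zero_nat K)
  exact tendsto_sub_nhds_zero_iff.mp hzero


lemma digit_formula (c m n g j : ℕ) (hm : 0 < m) :
    (c * g ^ (j + n) / m) % g ^ j = g ^ j * ((c * g ^ n) % m) / m := by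
  rcases Nat.eq_zero_or_pos (g ^ j) with hgj0 | hgj1
  · obtain ⟨hg0, hj0⟩ := pow_eq_zero_iff'.mp hgj0
    rw [hg0, zero_pow (by omega : j + n ≠ 0), zero_pow hj0]
    simp
  · have h1 : c * g ^ (j + n) = m * (g ^ j * (c * g ^ n / m)) + (c * g ^ n % m) * g ^ j := by
      conv_lhs => rw [pow_add, mul_comm (g ^ j) (g ^ n), ← mul_assoc,
        ← Nat.div_add_mod (c * g ^ n) m]
      ring
    rw [h1, Nat.mul_add_div hm]
    have h2 : (c * g ^ n % m) * g ^ j / m < g ^ j := by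
      rw [Nat.div_lt_iff_lt_mul hm]
      have h3 : c * g ^ n % m < m := Nat.mod_lt _ hm
      calc (c * g ^ n % m) * g ^ j < m * g ^ j :=
        Nat.mul_lt_mul_of_lt_of_le h3 (le_refl _) hgj1
      _ = g ^ j * m := by ring
    rw [Nat.mul_add_mod, Nat.mod_eq_of_lt h2, mul_comm (g ^ j) (c * g ^ n % m)]



lemma image_coset (m D P : ℕ) (hm : m = D * P) (hD : 1 ≤ D) (F : ℕ → ℕ) (ρ : ℕ)
    (hinj : ∀ x ∈ range P, ∀ y ∈ range P, F x = F y → x = y)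
    (hmem : ∀ t ∈ range P, F t < m ∧ F t % D = ρ) :
    (range P).image F = (range P).image (fun z => ρ + D * z) := by
  apply Finset.eq_of_subset_of_card_le
  · intro x hx
    obtain ⟨t, ht, rfl⟩ := Finset.mem_image.mp hx
    obtain ⟨hlt, hmod⟩ := hmem t ht
    refine Finset.mem_image.mpr ⟨F t / D, Finset.mem_range.mpr ?_, ?_⟩
    · rw [Nat.div_lt_iff_lt_mul (by omega)]
      calc F t < m := hlt
        _ = P * D := by rw [hm]; ring
    · have h1 : D * (F t / D) + F t % D = F t := Nat.div_add_mod (F t) D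
      rw [hmod] at h1
      omega
  · calc ((range P).image (fun z => ρ + D * z)).card ≤ (range P).card :=
        Finset.card_image_le
      _ = ((range P).image F).card := (Finset.card_image_of_injOn
        (fun x hx y hy h => hinj x hx y hy h)).symm

lemma countA (g m D P E R s j c : ℕ) (hg : 2 ≤ g) (hm : m = D * P) (hD : 1 ≤ D)
    (hP : 1 ≤ P) (hsj : s < g ^ j) (hgm : Nat.Coprime g m) (hcm : Nat.Coprime c m)
    (hgE : D ∣ g ^ E - 1) (hIff : ∀ t, m ∣ g ^ (E * t) - 1 ↔ P ∣ t) :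
    (((range (E * (P * R))).filter
        (fun n => g ^ j * ((c * g ^ n) % m) / m = s)).card) * g ^ j
      ≤ E * R * P + E * R * (2 * g ^ j) ∧
    E * R * P ≤ (((range (E * (P * R))).filter
        (fun n => g ^ j * ((c * g ^ n) % m) / m = s)).card) * g ^ j
      + E * R * (2 * g ^ j) := by
  have hm0 : 0 < m := by rw [hm]; positivity
  have hg1 : 1 ≤ g := by omega
  set ind : ℕ → ℕ := fun x => if g ^ j * x / m = s then 1 else 0 with hind
  -- the inner sum for fixed u equals R * L u
  have inner : ∀ u : ℕ, ∃ ρu : ℕ, ρu < D ∧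
      ∑ t ∈ range (P * R), ind ((c * g ^ (E * t + u)) % m)
        = R * ∑ z ∈ range P, ind (ρu + D * z) := by
    intro u
    set cu := (c * g ^ u) % m with hcu_def
    have hcu_lt : cu < m := Nat.mod_lt _ hm0
    have hcu : Nat.Coprime cu m := by
      have h1 : Nat.Coprime m (c * g ^ u) :=
        (Nat.Coprime.mul hcm (Nat.Coprime.pow_left u hgm)).symm
      have h2 : Nat.gcd (c * g ^ u % m) m = 1 := by rw [← Nat.gcd_rec]; exact h1
      exact h2
    refine ⟨(cu * (1 % D)) % D, Nat.mod_lt _ (by omega), ?_⟩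
    -- rewrite integrand
    have key : ∀ t, (c * g ^ (E * t + u)) % m = (cu * (g ^ (E * t) % m)) % m := by
      intro t
      rw [pow_add]
      rw [show c * (g ^ (E * t) * g ^ u) = c * g ^ u * g ^ (E * t) by ring]
      rw [Nat.mul_mod]
    have hstep1 : ∑ t ∈ range (P * R), ind ((c * g ^ (E * t + u)) % m)
        = ∑ t ∈ range (P * R), ind ((cu * (g ^ (E * t) % m)) % m) :=
      Finset.sum_congr rfl (fun t _ => by rw [key t])
    -- periodicity in t
    have hEP : m ∣ g ^ (E * P) - 1 := (hIff P).mpr dvd_rfl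
    have hEPmod : g ^ (E * P) % m = 1 % m := by
      have h1 : (1 : ℕ) ≤ g ^ (E * P) := Nat.one_le_pow _ _ (by omega)
      exact ((Nat.modEq_iff_dvd' h1).mpr hEP).symm
    have hper : ∀ t, g ^ (E * (t + P)) % m = g ^ (E * t) % m := by
      intro t
      have h2 : E * (t + P) = E * t + E * P := by ring
      rw [h2, pow_add, Nat.mul_mod, hEPmod, ← Nat.mul_mod, mul_one]
    have hstep2 : ∑ t ∈ range (P * R), ind ((cu * (g ^ (E * t) % m)) % m)
        = R * ∑ t ∈ range P, ind ((cu * (g ^ (E * t) % m)) % m) :=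
      sum_periodic _ P (fun t => by rw [hper t]) R
    -- injectivity of t ↦ g^(E*t) % m on range P
    have hsym : ∀ t t', t' ≤ t → t < P → g ^ (E * t) % m = g ^ (E * t') % m → t = t' := by
      intro t t' hle hlt heq
      have hmle : g ^ (E * t') ≤ g ^ (E * t) :=
        Nat.pow_le_pow_right (by omega) (Nat.mul_le_mul_left E hle)
      have hdvd : m ∣ g ^ (E * t) - g ^ (E * t') :=
        (Nat.modEq_iff_dvd' hmle).mp heq.symm
      have hfac : g ^ (E * t) - g ^ (E * t') = g ^ (E * t') * (g ^ (E * (t - t')) - 1) := by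
        rw [Nat.mul_sub, mul_one, ← pow_add, ← Nat.mul_add]
        congr 3
        omega
      rw [hfac] at hdvd
      have hco : Nat.Coprime m (g ^ (E * t')) := (Nat.Coprime.pow_left _ hgm).symm
      have hdvd2 : m ∣ g ^ (E * (t - t')) - 1 := hco.dvd_of_dvd_mul_left hdvd
      have hPd : P ∣ t - t' := (hIff _).mp hdvd2
      rcases Nat.eq_zero_or_pos (t - t') with h0 | hpos
      · omega
      · have := Nat.le_of_dvd hpos hPd
        omega
    have hinj1 : ∀ x ∈ range P, ∀ y ∈ range P, g ^ (E * x) % m = g ^ (E * y) % m → x = y := by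
      intro x hx y hy h
      rcases le_total y x with hle | hle
      · exact hsym x y hle (Finset.mem_range.mp hx) h
      · exact (hsym y x hle (Finset.mem_range.mp hy) h.symm).symm
    -- S = AP set
    have hmem1 : ∀ t ∈ range P, g ^ (E * t) % m < m ∧ (g ^ (E * t) % m) % D = 1 % D := by
      intro t _
      refine ⟨Nat.mod_lt _ hm0, ?_⟩
      rw [Nat.mod_mod_of_dvd _ ⟨P, hm⟩]
      have h1 : (1 : ℕ) ≤ g ^ E := Nat.one_le_pow _ _ (by omega)
      have h2 : g ^ E % D = 1 % D := ((Nat.modEq_iff_dvd' h1).mpr hgE).symm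
      rw [pow_mul, Nat.pow_mod, h2, ← Nat.pow_mod, one_pow]
    have hS := image_coset m D P hm hD (fun t => g ^ (E * t) % m) (1 % D) hinj1 hmem1
    have hstep3 : ∑ t ∈ range P, ind ((cu * (g ^ (E * t) % m)) % m)
        = ∑ y ∈ range P, ind ((cu * (1 % D + D * y)) % m) := by
      rw [← Finset.sum_image (f := fun x => ind ((cu * x) % m)) hinj1, hS,
        Finset.sum_image (f := fun x => ind ((cu * x) % m))
          (fun x _ y _ h => Nat.eq_of_mul_eq_mul_left (show 0 < D by omega)
            (Nat.add_left_cancel h))]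
    -- second coset shift
    set ρu := (cu * (1 % D)) % D with hρu
    have hval : ∀ y, cu * (1 % D + D * y) = cu * (1 % D) + (cu * y) * D := by intro y; ring
    have hinj2 : ∀ x ∈ range P, ∀ y ∈ range P,
        (cu * (1 % D + D * x)) % m = (cu * (1 % D + D * y)) % m → x = y := by
      have hsym2 : ∀ x y, y ≤ x → x < P →
          (cu * (1 % D + D * x)) % m = (cu * (1 % D + D * y)) % m → x = y := by
        intro x y hle hlt heq
        have hmle : cu * (1 % D + D * y) ≤ cu * (1 % D + D * x) :=
          Nat.mul_le_mul_left cu (by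
            have : D * y ≤ D * x := Nat.mul_le_mul_left D hle
            omega)
        have hdvd : m ∣ cu * (1 % D + D * x) - cu * (1 % D + D * y) :=
          (Nat.modEq_iff_dvd' hmle).mp heq.symm
        have hfac : cu * (1 % D + D * x) - cu * (1 % D + D * y) = cu * (D * (x - y)) := by
          rw [← Nat.mul_sub]
          congr 1
          have h1 : D * (x - y) = D * x - D * y := Nat.mul_sub D x y
          omega
        rw [hfac] at hdvd
        have hdvd2 : m ∣ D * (x - y) := hcu.symm.dvd_of_dvd_mul_left hdvd
        rw [hm] at hdvd2
        have hPd : P ∣ x - y := by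
          rcases hdvd2 with ⟨w, hw⟩
          refine ⟨w, ?_⟩
          have : D * (x - y) = D * (P * w) := by rw [hw]; ring
          exact Nat.eq_of_mul_eq_mul_left (by omega) this
        rcases Nat.eq_zero_or_pos (x - y) with h0 | hpos
        · omega
        · have := Nat.le_of_dvd hpos hPd
          omega
      intro x hx y hy h
      rcases le_total y x with hle | hle
      · exact hsym2 x y hle (Finset.mem_range.mp hx) h
      · exact (hsym2 y x hle (Finset.mem_range.mp hy) h.symm).symm
    have hmem2 : ∀ y ∈ range P, (cu * (1 % D + D * y)) % m < m ∧
        ((cu * (1 % D + D * y)) % m) % D = ρu := by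
      intro y _
      refine ⟨Nat.mod_lt _ hm0, ?_⟩
      rw [Nat.mod_mod_of_dvd _ ⟨P, hm⟩, hval, Nat.add_mul_mod_self_right]
    have hS2 := image_coset m D P hm hD (fun y => (cu * (1 % D + D * y)) % m) ρu hinj2 hmem2
    have hstep4 : ∑ y ∈ range P, ind ((cu * (1 % D + D * y)) % m)
        = ∑ z ∈ range P, ind (ρu + D * z) := by
      rw [← Finset.sum_image (f := ind) hinj2, hS2,
        Finset.sum_image (f := ind) (fun x _ y _ h => Nat.eq_of_mul_eq_mul_left
          (show 0 < D by omega) (Nat.add_left_cancel h))]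
    rw [hstep1, hstep2, hstep3, hstep4]
  -- assemble
  set C := (((range (E * (P * R))).filter
      (fun n => g ^ j * ((c * g ^ n) % m) / m = s)).card) with hC
  have hCsum : C = ∑ u ∈ range E, ∑ t ∈ range (P * R), ind ((c * g ^ (E * t + u)) % m) := by
    rw [hC, Finset.card_filter, sum_grid, Finset.sum_comm]
  choose ρf hρf1 hρf2 using inner
  have hCsum2 : C = ∑ u ∈ range E, R * ∑ z ∈ range P, ind (ρf u + D * z) := by
    rw [hCsum]
    exact Finset.sum_congr rfl (fun u _ => hρf2 u)
  have hbound := fun u => interval_count g j s D P m (ρf u) hg1 hm hD hP (hρf1 u) hsj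
  constructor
  · calc C * g ^ j = ∑ u ∈ range E, R * ((∑ z ∈ range P, ind (ρf u + D * z)) * g ^ j) := by
          rw [hCsum2, Finset.sum_mul]
          exact Finset.sum_congr rfl (fun u _ => by ring)
      _ ≤ ∑ u ∈ range E, R * (P + 2 * g ^ j) := Finset.sum_le_sum
          (fun u _ => Nat.mul_le_mul_left R (hbound u).1)
      _ = E * R * P + E * R * (2 * g ^ j) := by
          rw [Finset.sum_const, Finset.card_range]
          ring
  · calc E * R * P = ∑ u ∈ range E, R * P := by rw [Finset.sum_const, Finset.card_range]; ring
      _ ≤ ∑ u ∈ range E, R * ((∑ z ∈ range P, ind (ρf u + D * z)) * g ^ j + 2 * g ^ j) :=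
          Finset.sum_le_sum (fun u _ => Nat.mul_le_mul_left R (hbound u).2)
      _ = C * g ^ j + E * R * (2 * g ^ j) := by
          rw [hCsum2, Finset.sum_mul]
          rw [show ∑ u ∈ range E, R * ((∑ z ∈ range P, ind (ρf u + D * z)) * g ^ j + 2 * g ^ j)
            = ∑ u ∈ range E, (R * (∑ z ∈ range P, ind (ρf u + D * z)) * g ^ j
              + R * (2 * g ^ j)) from Finset.sum_congr rfl (fun u _ => by ring)]
          rw [Finset.sum_add_distrib, Finset.sum_const, Finset.card_range]
          ring

/-- Let `b > 1` have at least one prime factor not dividing `g ≥ 2`, and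
let `(a_k)` be a sequence of positive integers coprime to `b`. For each `j`-word
`s < g^j`, the limiting relative frequency
`d_k(s) = lim_{N→∞} (1/N)·#{i : j ≤ i ≤ N, ⌊a_k·g^i/b^k⌋ mod g^j = s}` exists for
every `k ≥ 1`, and `d_k(s) → 1/g^j` as `k → ∞`. -/
theorem density_tendsto_full_complexity (g b : ℕ) (hg : 2 ≤ g) (hb : 1 < b)
    (hp : ∃ p : ℕ, p.Prime ∧ p ∣ b ∧ ¬p ∣ g)
    (a : ℕ → ℕ) (ha : ∀ k : ℕ, 1 ≤ k → 0 < a k ∧ Nat.gcd (a k) b = 1)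
    (j : ℕ) (hj : 1 ≤ j) :
    ∀ s : ℕ, s < g ^ j →
      ∃ d : ℕ → ℝ,
        (∀ k : ℕ, 1 ≤ k →
          Filter.Tendsto
            (fun N : ℕ =>
              (((Finset.Icc j N).filter
                  (fun i => (a k * g ^ i / b ^ k) % g ^ j = s)).card : ℝ) / (N : ℝ))
            Filter.atTop (nhds (d k))) ∧
        Filter.Tendsto d Filter.atTop (nhds (1 / (g : ℝ) ^ j)) := by
  intro s hs
  obtain ⟨p, hp, hpb, hpg⟩ := hp
  have hb0 : b ≠ 0 := by omega
  have hg0 : g ≠ 0 := by omega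
  set Q1 := Nat.gcd b (g ^ b) with hQ1
  have hQ1b : Q1 ∣ b := Nat.gcd_dvd_left _ _
  have hQ1g : Q1 ∣ g ^ b := Nat.gcd_dvd_right _ _
  have hQ10 : Q1 ≠ 0 := fun h => hb0 (Nat.eq_zero_of_gcd_eq_zero_left h)
  set m1 := b / Q1 with hm1def
  have hm1Q1 : m1 * Q1 = b := Nat.div_mul_cancel hQ1b
  have hm1dvd : m1 ∣ b := ⟨Q1, hm1Q1.symm⟩
  have hm10 : m1 ≠ 0 := by rintro h; rw [h, zero_mul] at hm1Q1; omega
  have hQfact : ∀ q : ℕ, Q1.factorization q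
      = min (b.factorization q) (b * g.factorization q) := by
    intro q
    rw [hQ1, Nat.factorization_gcd hb0 (pow_ne_zero b hg0), Nat.factorization_pow]
    simp [Finsupp.inf_apply]
  have hm1fact : ∀ q : ℕ, m1.factorization q
      = b.factorization q - Q1.factorization q := by
    intro q
    rw [hm1def, Nat.factorization_div hQ1b]
    simp
  have hm1g : Nat.Coprime m1 g := by
    by_contra hcon
    obtain ⟨q, hq, hqd⟩ := Nat.exists_prime_and_dvd hcon
    have hqm1 : q ∣ m1 := hqd.trans (Nat.gcd_dvd_left _ _)
    have hqg : q ∣ g := hqd.trans (Nat.gcd_dvd_right _ _)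
    have h1 : 0 < m1.factorization q := hq.factorization_pos_of_dvd hm10 hqm1
    have h2 : 0 < g.factorization q := hq.factorization_pos_of_dvd hg0 hqg
    have h3 : b.factorization q < b := Nat.factorization_lt q hb0
    have h4 : b.factorization q ≤ b * g.factorization q := by
      calc b.factorization q ≤ b := by omega
        _ = b * 1 := (mul_one b).symm
        _ ≤ b * g.factorization q := Nat.mul_le_mul_left b h2
    rw [hm1fact q, hQfact q] at h1
    omega
  have hpg' : Nat.Coprime p g := (Nat.Prime.coprime_iff_not_dvd hp).mpr hpg
  have hgfp : g.factorization p = 0 := Nat.factorization_eq_zero_of_not_dvd hpg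
  have hpα : 0 < m1.factorization p := by
    have h5 : 0 < b.factorization p := hp.factorization_pos_of_dvd hb0 hpb
    rw [hm1fact p, hQfact p, hgfp]
    simp
    omega
  set α := m1.factorization p with hα
  set r := m1 / p ^ α with hrdef
  have hαr : p ^ α * r = m1 := Nat.ordProj_mul_ordCompl_eq_self m1 p
  have hpr : ¬ p ∣ r := Nat.not_dvd_ordCompl hp hm10
  have hr0 : r ≠ 0 := by rintro h; rw [h, mul_zero] at hαr; exact hm10 hαr.symm
  have hrm1 : r ∣ m1 := ⟨p ^ α, by rw [← hαr]; ring⟩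
  have hgm1 : Nat.Coprime g m1 := hm1g.symm
  have hgr : Nat.Coprime g r := hgm1.coprime_dvd_right hrm1
  have hgp2 : Nat.Coprime g (p ^ 2) := Nat.Coprime.pow_right _ hpg'.symm
  have hp2 : 2 ≤ p := hp.two_le
  set e := Nat.totient (p ^ 2) with hedef
  have he1 : 0 < e := Nat.totient_pos.mpr (by positivity)
  have hx2 : 2 ≤ g ^ e := by
    calc 2 ≤ g := hg
      _ = g ^ 1 := (pow_one g).symm
      _ ≤ g ^ e := Nat.pow_le_pow_right (by omega) (by omega)
  have hxmod : g ^ e % p ^ 2 = 1 % p ^ 2 := Nat.ModEq.pow_totient hgp2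
  set β0 := (g ^ e - 1).factorization p with hβ0
  set γ := (Nat.totient r).factorization p with hγ
  have hφr : 0 < Nat.totient r := Nat.totient_pos.mpr (Nat.pos_of_ne_zero hr0)
  have hLTE : ∀ n : ℕ, n ≠ 0 →
      (g ^ (e * n) - 1).factorization p = β0 + n.factorization p := by
    intro n hn
    rw [pow_mul, fact_pow_lte hp n hn (g ^ e) hx2 hxmod]
  set E : ℕ → ℕ := fun k => e * (Nat.totient r * r ^ (k - 1)) with hEdef
  have hrpos : 0 < r := Nat.pos_of_ne_zero hr0
  have hE0 : ∀ k, 0 < E k := fun k => by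
    have : 0 < r ^ (k - 1) := Nat.pow_pos hrpos
    positivity
  have hgpow1 : ∀ w : ℕ, 1 ≤ g ^ w := fun w => Nat.one_le_pow _ _ (by omega)
  have hgpow_ne : ∀ w : ℕ, w ≠ 0 → g ^ w - 1 ≠ 0 := by
    intro w hw
    have h1 : 2 ≤ g ^ w := by
      calc 2 ≤ g := hg
        _ = g ^ 1 := (pow_one g).symm
        _ ≤ g ^ w := Nat.pow_le_pow_right (by omega) (by omega)
    omega
  have hrk : ∀ k, 1 ≤ k → r ^ k ∣ g ^ (E k) - 1 := by
    intro k hk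
    have h1 : Nat.Coprime (g ^ e) r := Nat.Coprime.pow_left e hgr
    have h2 := Nat.ModEq.pow_totient h1
    have h3 : 1 ≤ (g ^ e) ^ r.totient := Nat.one_le_pow _ _ (by positivity)
    have hy : r ∣ g ^ (e * Nat.totient r) - 1 := by
      rw [pow_mul]
      exact (Nat.modEq_iff_dvd' h3).mp h2.symm
    have h4 := lift_all (hgpow1 _) hy (k - 1)
    rw [← pow_mul] at h4
    have h5 : e * Nat.totient r * r ^ (k - 1) = E k := by rw [hEdef]; ring
    have h6 : k - 1 + 1 = k := by omega
    rw [h5, h6] at h4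
    exact h4
  have hEfact : ∀ k t : ℕ, 1 ≤ k → t ≠ 0 →
      (g ^ (E k * t) - 1).factorization p = (β0 + γ) + t.factorization p := by
    intro k t hk ht
    have h1 : E k * t = e * (Nat.totient r * r ^ (k - 1) * t) := by rw [hEdef]; ring
    have h2 : Nat.totient r * r ^ (k - 1) * t ≠ 0 := by
      have : 0 < r ^ (k - 1) := Nat.pow_pos hrpos
      positivity
    rw [h1, hLTE _ h2]
    have h3 : (Nat.totient r * r ^ (k - 1) * t).factorization p
        = γ + ((k - 1) * r.factorization p) + t.factorization p := by
      rw [Nat.factorization_mul (by positivity) ht,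
        Nat.factorization_mul (by omega) (pow_ne_zero _ hr0),
        Nat.factorization_pow]
      simp only [Finsupp.coe_add, Pi.add_apply, Finsupp.coe_smul, Pi.smul_apply,
        smul_eq_mul, hγ]
      try ring
      try rfl
    rw [h3, Nat.factorization_eq_zero_of_not_dvd hpr]
    ring
  -- per-k objects
  have hQ1pos : 0 < Q1 := Nat.pos_of_ne_zero hQ10
  have hm1pos : 0 < m1 := Nat.pos_of_ne_zero hm10
  set c : ℕ → ℕ := fun k => a k * g ^ (b * k) / Q1 ^ k with hcdef
  have hQdvd : ∀ k : ℕ, Q1 ^ k ∣ g ^ (b * k) := by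
    intro k
    have h1 : Q1 ^ k ∣ (g ^ b) ^ k := pow_dvd_pow_of_dvd hQ1g k
    rwa [← pow_mul] at h1
  have hcQ : ∀ k : ℕ, c k * Q1 ^ k = a k * g ^ (b * k) := by
    intro k
    exact Nat.div_mul_cancel ((hQdvd k).mul_left (a k))
  have hbk : ∀ k : ℕ, b ^ k = m1 ^ k * Q1 ^ k := by
    intro k
    rw [← hm1Q1, mul_pow]
  have hmk_pos : ∀ k : ℕ, 0 < m1 ^ k := fun k => Nat.pow_pos hm1pos
  have hval : ∀ k, 1 ≤ k → ∀ n : ℕ,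
      (a k * g ^ (b * k + j + n) / b ^ k) % g ^ j
        = g ^ j * ((c k * g ^ n) % m1 ^ k) / m1 ^ k := by
    intro k hk n
    have h1 : a k * g ^ (b * k + j + n) = (c k * g ^ (j + n)) * Q1 ^ k := by
      have e1 : b * k + j + n = b * k + (j + n) := by omega
      rw [e1, pow_add, ← mul_assoc, ← hcQ k]
      ring
    have h2 : Q1 ^ k > 0 := Nat.pow_pos hQ1pos
    rw [h1, hbk k, Nat.mul_div_mul_right _ _ h2]
    exact digit_formula (c k) (m1 ^ k) n g j (hmk_pos k)
  have hcopr : ∀ k, 1 ≤ k → Nat.Coprime (c k) (m1 ^ k) := by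
    intro k hk
    have h1 : c k ∣ a k * g ^ (b * k) := ⟨Q1 ^ k, (hcQ k).symm⟩
    have h2 : Nat.Coprime (a k) m1 := Nat.Coprime.coprime_dvd_right hm1dvd (ha k hk).2
    have h3 : Nat.Coprime (a k * g ^ (b * k)) m1 :=
      Nat.Coprime.mul h2 (Nat.Coprime.pow_left _ hgm1)
    exact Nat.Coprime.pow_right _ (Nat.Coprime.coprime_dvd_left h1 h3)
  set Λ : ℕ → ℕ := fun k => E k * p ^ (α * k) with hΛdef
  have hΛpos : ∀ k, 0 < Λ k := fun k =>
    Nat.mul_pos (hE0 k) (Nat.pow_pos (by omega))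
  have hmsplit : ∀ k : ℕ, m1 ^ k = p ^ (α * k) * r ^ k := by
    intro k
    rw [← hαr, mul_pow, ← pow_mul]
  have hpcop : Nat.Coprime p r := (Nat.Prime.coprime_iff_not_dvd hp).mpr hpr
  have hfactpow : ∀ n : ℕ, (p ^ n).factorization p = n := by
    intro n
    rw [Nat.Prime.factorization_pow hp, Finsupp.single_eq_same]
  have hperiodd : ∀ k, 1 ≤ k → m1 ^ k ∣ g ^ (Λ k) - 1 := by
    intro k hk
    rw [hmsplit k]
    apply Nat.Coprime.mul_dvd_of_dvd_of_dvd (Nat.Coprime.pow _ _ hpcop)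
    · have hne : g ^ (E k * p ^ (α * k)) - 1 ≠ 0 := by
        apply hgpow_ne
        have := hE0 k
        positivity
      rw [show Λ k = E k * p ^ (α * k) from rfl,
        hp.pow_dvd_iff_le_factorization hne,
        hEfact k (p ^ (α * k)) hk (pow_ne_zero _ (by omega)), hfactpow]
      omega
    · have h1 := hrk k hk
      have h2 : g ^ (E k) - 1 ∣ g ^ (E k * p ^ (α * k)) - 1 := by
        have h3 := Nat.sub_dvd_pow_sub_pow (g ^ (E k)) 1 (p ^ (α * k))
        rwa [one_pow, ← pow_mul] at h3
      exact h1.trans h2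
  have htrans : ∀ k, 1 ≤ k →
      ((Finset.Ico (b * k + j) (b * k + j + Λ k)).filter
        (fun i => (a k * g ^ i / b ^ k) % g ^ j = s)).card
      = ((range (Λ k)).filter
        (fun n => g ^ j * ((c k * g ^ n) % m1 ^ k) / m1 ^ k = s)).card := by
    intro k hk
    rw [Finset.card_filter, Finset.card_filter, Finset.sum_Ico_eq_sum_range]
    have e1 : b * k + j + Λ k - (b * k + j) = Λ k := by omega
    rw [e1]
    apply Finset.sum_congr rfl
    intro w _
    simp only [hval k hk w]
  refine ⟨fun k => (((Finset.Ico (b * k + j) (b * k + j + Λ k)).filter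
      (fun i => (a k * g ^ i / b ^ k) % g ^ j = s)).card : ℝ) / (Λ k : ℝ), ?_, ?_⟩
  · -- existence of the density for each k ≥ 1
    intro k hk
    apply cesaro (fun i => (a k * g ^ i / b ^ k) % g ^ j = s) j (b * k + j) (Λ k)
      (by omega) (hΛpos k)
    intro i hi
    obtain ⟨n, rfl⟩ : ∃ n, i = b * k + j + n := ⟨i - (b * k + j), by omega⟩
    have hmodper : (c k * g ^ (n + Λ k)) % m1 ^ k = (c k * g ^ n) % m1 ^ k := by
      have h1 : g ^ (Λ k) % m1 ^ k = 1 % m1 ^ k :=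
        ((Nat.modEq_iff_dvd' (hgpow1 _)).mpr (hperiodd k hk)).symm
      rw [pow_add, ← mul_assoc, Nat.mul_mod, h1, ← Nat.mul_mod, mul_one]
    have e2 : b * k + j + n + Λ k = b * k + j + (n + Λ k) := by omega
    rw [e2, hval k hk (n + Λ k), hval k hk n, hmodper]
  · -- the limit of the densities
    have hgeo : Filter.Tendsto (fun k : ℕ => (2 * 2 ^ (β0 + γ) : ℝ) * (1 / 2 : ℝ) ^ k)
        Filter.atTop (nhds 0) := by
      have h1 : Filter.Tendsto (fun k : ℕ => (1 / 2 : ℝ) ^ k) Filter.atTop (nhds 0) :=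
        tendsto_pow_atTop_nhds_zero_of_lt_one (by norm_num) (by norm_num)
      have h2 := h1.const_mul (2 * 2 ^ (β0 + γ) : ℝ)
      simpa using h2
    apply tendsto_sub_nhds_zero_iff.mp
    apply squeeze_zero_norm' _ hgeo
    filter_upwards [Filter.eventually_ge_atTop (β0 + γ + 1)] with k hk1
    have hk : 1 ≤ k := by omega
    have hαβ : β0 + γ ≤ α * k := by
      have h1 : k ≤ α * k := Nat.le_mul_of_pos_left k hpα
      omega
    set P := p ^ (α * k - (β0 + γ)) with hPdef
    set R := p ^ (β0 + γ) with hRdef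
    set D := p ^ (β0 + γ) * r ^ k with hDdef
    have hPR : P * R = p ^ (α * k) := by
      rw [hPdef, hRdef, ← pow_add]
      congr 1
      omega
    have hmD : m1 ^ k = D * P := by
      have h2 : p ^ (β0 + γ) * r ^ k * p ^ (α * k - (β0 + γ))
          = p ^ ((β0 + γ) + (α * k - (β0 + γ))) * r ^ k := by
        rw [pow_add]; ring
      have h3 : (β0 + γ) + (α * k - (β0 + γ)) = α * k := by omega
      rw [hmsplit k, hDdef, hPdef, h2, h3]
    have hD1 : 1 ≤ D := by
      rw [hDdef]
      exact Nat.one_le_iff_ne_zero.mpr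
        (Nat.mul_ne_zero (pow_ne_zero _ (by omega)) (pow_ne_zero _ hr0))
    have hP1 : 1 ≤ P := Nat.one_le_pow _ _ (by omega)
    have hgmk : Nat.Coprime g (m1 ^ k) := Nat.Coprime.pow_right _ hgm1
    have hgE : D ∣ g ^ (E k) - 1 := by
      rw [hDdef]
      apply Nat.Coprime.mul_dvd_of_dvd_of_dvd (Nat.Coprime.pow _ _ hpcop)
      · rw [hp.pow_dvd_iff_le_factorization (hgpow_ne _ (by
          have := hE0 k
          omega))]
        have h1 := hEfact k 1 hk one_ne_zero
        rw [mul_one] at h1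
        rw [h1]
        simp
      · exact hrk k hk
    have hIff : ∀ t, m1 ^ k ∣ g ^ (E k * t) - 1 ↔ P ∣ t := by
      intro t
      rcases Nat.eq_zero_or_pos t with rfl | ht
      · simp
      constructor
      · intro hdvd
        have h1 : p ^ (α * k) ∣ g ^ (E k * t) - 1 := by
          refine dvd_trans ?_ hdvd
          rw [hmsplit k]
          exact dvd_mul_right _ _
        have hne : g ^ (E k * t) - 1 ≠ 0 := hgpow_ne _ (by
          have := hE0 k
          positivity)
        rw [hp.pow_dvd_iff_le_factorization hne, hEfact k t hk (by omega)] at h1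
        rw [hPdef, hp.pow_dvd_iff_le_factorization (by omega)]
        omega
      · rintro ⟨t', rfl⟩
        have hbase : m1 ^ k ∣ g ^ (E k * P) - 1 := by
          rw [hmsplit k]
          apply Nat.Coprime.mul_dvd_of_dvd_of_dvd (Nat.Coprime.pow _ _ hpcop)
          · have hne : g ^ (E k * P) - 1 ≠ 0 := hgpow_ne _ (by
              have h5 := hE0 k
              have h6 : 0 < P := by omega
              positivity)
            rw [hp.pow_dvd_iff_le_factorization hne,
              hEfact k P hk (by omega), hPdef, hfactpow]
            omega
          · refine (hrk k hk).trans ?_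
            have h3 := Nat.sub_dvd_pow_sub_pow (g ^ (E k)) 1 P
            rwa [one_pow, ← pow_mul] at h3
        refine hbase.trans ?_
        have h3 := Nat.sub_dvd_pow_sub_pow (g ^ (E k * P)) 1 t'
        rwa [one_pow, ← pow_mul, mul_assoc (E k) P t'] at h3
    have hCA := countA g (m1 ^ k) D P (E k) R s j (c k) hg hmD hD1 hP1 hs hgmk
      (hcopr k hk) hgE hIff
    obtain ⟨hub, hlb⟩ := hCA
    have hΛPR : Λ k = E k * (P * R) := by
      rw [hPR]
    rw [htrans k hk, hΛPR]
    set Cn := ((range (E k * (P * R))).filter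
        (fun n => g ^ j * ((c k * g ^ n) % m1 ^ k) / m1 ^ k = s)).card with hCn
    -- real estimate
    have hG0 : (0 : ℝ) < (g : ℝ) ^ j := by positivity
    have hE0' : (0 : ℝ) < (E k : ℝ) := by exact_mod_cast hE0 k
    have hP0 : (0 : ℝ) < (P : ℝ) := by exact_mod_cast (by omega : 0 < P)
    have hR0 : (0 : ℝ) < (R : ℝ) := by
      have : 0 < R := by rw [hRdef]; positivity
      exact_mod_cast this
    have hΛ0 : (0 : ℝ) < ((E k * (P * R) : ℕ) : ℝ) := by
      have := hΛpos k
      rw [hΛPR] at this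
      exact_mod_cast this
    have hubR : (Cn : ℝ) * (g : ℝ) ^ j
        ≤ (E k : ℝ) * R * P + (E k : ℝ) * R * (2 * (g : ℝ) ^ j) := by
      exact_mod_cast hub
    have hlbR : (E k : ℝ) * R * P
        ≤ (Cn : ℝ) * (g : ℝ) ^ j + (E k : ℝ) * R * (2 * (g : ℝ) ^ j) := by
      exact_mod_cast hlb
    have hERP : (E k : ℝ) * R * P = ((E k * (P * R) : ℕ) : ℝ) := by
      push_cast
      ring
    have hrearr : (E k : ℝ) * R * (2 * (g : ℝ) ^ j) = 2 * (E k : ℝ) * R * (g : ℝ) ^ j := by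
      ring
    have habs : |(Cn : ℝ) * (g : ℝ) ^ j - ((E k * (P * R) : ℕ) : ℝ)|
        ≤ 2 * (E k : ℝ) * R * (g : ℝ) ^ j := by
      rw [abs_le]
      constructor
      · linarith [hlbR, hERP, hrearr]
      · linarith [hubR, hERP, hrearr]
    have heq2 : (Cn : ℝ) / ((E k * (P * R) : ℕ) : ℝ) - 1 / (g : ℝ) ^ j
        = ((Cn : ℝ) * (g : ℝ) ^ j - ((E k * (P * R) : ℕ) : ℝ))
          / (((E k * (P * R) : ℕ) : ℝ) * (g : ℝ) ^ j) := by
      field_simp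
    rw [Real.norm_eq_abs, heq2, abs_div,
      abs_of_pos (by positivity : (0:ℝ) < ((E k * (P * R) : ℕ) : ℝ) * (g : ℝ) ^ j)]
    have hstep1 : |(Cn : ℝ) * (g : ℝ) ^ j - ((E k * (P * R) : ℕ) : ℝ)|
          / (((E k * (P * R) : ℕ) : ℝ) * (g : ℝ) ^ j)
        ≤ (2 * (E k : ℝ) * R * (g : ℝ) ^ j)
          / (((E k * (P * R) : ℕ) : ℝ) * (g : ℝ) ^ j) :=
      div_le_div_of_nonneg_right habs (by positivity)
    have hstep2 : (2 * (E k : ℝ) * R * (g : ℝ) ^ j)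
          / (((E k * (P * R) : ℕ) : ℝ) * (g : ℝ) ^ j) = 2 / (P : ℝ) := by
      push_cast
      field_simp
    have hstep3 : 2 / (P : ℝ) ≤ (2 * 2 ^ (β0 + γ) : ℝ) * (1 / 2 : ℝ) ^ k := by
      have h1 : (2 : ℕ) ^ (k - (β0 + γ)) ≤ P := by
        rw [hPdef]
        calc (2:ℕ) ^ (k - (β0 + γ)) ≤ p ^ (k - (β0 + γ)) :=
            Nat.pow_le_pow_left hp2 _
          _ ≤ p ^ (α * k - (β0 + γ)) := Nat.pow_le_pow_right (by omega) (by
            have h2 : k ≤ α * k := Nat.le_mul_of_pos_left k hpα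
            omega)
      have h1R : ((2:ℝ)) ^ (k - (β0 + γ)) ≤ (P : ℝ) := by exact_mod_cast h1
      have h2R : (0:ℝ) < (2:ℝ) ^ (k - (β0 + γ)) := by positivity
      have h3 : 2 / (P : ℝ) ≤ 2 / ((2:ℝ) ^ (k - (β0 + γ))) :=
        div_le_div_of_nonneg_left (by norm_num) h2R h1R
      refine h3.trans ?_
      have h4 : ((2:ℝ)) ^ (k - (β0 + γ)) * 2 ^ (β0 + γ) = 2 ^ k := by
        rw [← pow_add]
        congr 1
        omega
      rw [div_pow, one_pow]
      apply le_of_eq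
      rw [mul_one_div, div_eq_div_iff (ne_of_gt h2R) (by positivity : ((2:ℝ)^k) ≠ 0)]
      calc 2 * (2:ℝ) ^ k = 2 * (2 ^ (k - (β0 + γ)) * 2 ^ (β0 + γ)) := by rw [h4]
        _ = 2 * 2 ^ (β0 + γ) * 2 ^ (k - (β0 + γ)) := by ring
    calc |(Cn : ℝ) * (g : ℝ) ^ j - ((E k * (P * R) : ℕ) : ℝ)|
          / (((E k * (P * R) : ℕ) : ℝ) * (g : ℝ) ^ j)
        ≤ (2 * (E k : ℝ) * R * (g : ℝ) ^ j)
          / (((E k * (P * R) : ℕ) : ℝ) * (g : ℝ) ^ j) := hstep1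
      _ = 2 / (P : ℝ) := hstep2
      _ ≤ (2 * 2 ^ (β0 + γ) : ℝ) * (1 / 2 : ℝ) ^ k := hstep3
end
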